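/- arXiv:1906.06776 — 4 statements merged into one kernel-verified Lean document; each statement's English description precedes it below -/
import Mathlib

section
/- For every z > 0 and σ > 0, if X is a Gaussian random variable with mean z and variance σ², then E[1 − tanh(z·X/σ²)] ≤ exp(−z²/(2σ²)). Consequently, for the standard Gaussian density f(x) = (2π)^{−1/2}·exp(−x²/2) in the class F, the LS-EM contraction factor satisfies κ(β*, β, σ) ≤ exp(−min(β, β*)²/(2σ²)) for all β, β* > 0. -/
open MeasureTheory Real Filter

noncomputable section

/-- The base log-concave density `f(x) = (1/C) * exp(-g(|x|))`. -/
def dens (g : ℝ → ℝ) (C : ℝ) (x : ℝ) : ℝ := (1 / C) * Real.exp (-g |x|)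

/-- The location-scale density `f_{β,σ}(x) = (1/σ) f((x-β)/σ)`. -/
def densLS (g : ℝ → ℝ) (C σ β : ℝ) (x : ℝ) : ℝ := (1 / σ) * dens g C ((x - β) / σ)

/-- `F_{β,σ}(x) = g(|x+β|/σ) - g(|x-β|/σ)`. -/
def Ffun (g : ℝ → ℝ) (σ β x : ℝ) : ℝ := g (|x + β| / σ) - g (|x - β| / σ)

/-- The population LS-EM update `M(β*, β) = E_{X ~ f_{β*,σ}}[X tanh(F_{β,σ}(X)/2)]`. -/
def Mfun (g : ℝ → ℝ) (C σ βs β : ℝ) : ℝ :=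
  ∫ x : ℝ, densLS g C σ βs x * (x * Real.tanh (Ffun g σ β x / 2))

/-- The contraction factor `κ(β*, β, σ) = E_{X ~ f_{z,σ}}[1 - tanh(F_{z,σ}(X)/2)]`,
where `z = min(|β|, |β*|)`. -/
def kappa (g : ℝ → ℝ) (C σ βs β : ℝ) : ℝ :=
  ∫ x : ℝ, densLS g C σ (min |β| |βs|) x *
    (1 - Real.tanh (Ffun g σ (min |β| |βs|) x / 2))

/-- Membership in the class `F` of rotation invariant (symmetric) log-concave densities
with unit variance: `f(x) = (1/C) exp(-g(|x|))` with `g` convex and strictly increasing on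
`[0, ∞)`, `g(0) = 0`, integrating to one and with unit second moment. -/
structure InClassF (g : ℝ → ℝ) (C : ℝ) : Prop where
  convexOn : ConvexOn ℝ (Set.Ici (0 : ℝ)) g
  strictMonoOn : StrictMonoOn g (Set.Ici (0 : ℝ))
  g_zero : g 0 = 0
  C_pos : 0 < C
  integral_one : ∫ x : ℝ, dens g C x = 1
  variance_one : ∫ x : ℝ, x ^ 2 * dens g C x = 1

/-- The regularity condition: differentiation under the integral sign is valid for the
integrals defining `M`, with respect to both the location parameter of the sampling
density and the current iterate. -/
def Regular (g : ℝ → ℝ) (C σ : ℝ) : Prop :=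
  (∀ β z : ℝ, HasDerivAt (fun z' => Mfun g C σ z' β)
      (∫ x : ℝ, deriv (fun z' => densLS g C σ z' x) z *
        (x * Real.tanh (Ffun g σ β x / 2))) z) ∧
  (∀ βs b : ℝ, HasDerivAt (fun b' => Mfun g C σ βs b')
      (∫ x : ℝ, densLS g C σ βs x *
        (x * deriv (fun b' => Real.tanh (Ffun g σ b' x / 2)) b)) b)

lemma tanh_bound (t : ℝ) : 1 - Real.tanh t ≤ Real.exp (-t) := by
  have hc : 0 < Real.cosh t := Real.cosh_pos t
  have h1 : 1 - Real.tanh t = Real.exp (-t) / Real.cosh t := by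
    rw [Real.tanh_eq_sinh_div_cosh, ← Real.cosh_sub_sinh]
    field_simp
  rw [h1]
  exact div_le_self (Real.exp_pos _).le (Real.one_le_cosh t)

lemma continuous_tanh' : Continuous Real.tanh := by
  have h : Real.tanh = fun x => Real.sinh x / Real.cosh x :=
    funext fun x => Real.tanh_eq_sinh_div_cosh x
  rw [h]
  exact Real.continuous_sinh.div Real.continuous_cosh fun x => (Real.cosh_pos x).ne'

lemma abs_tanh_le (t : ℝ) : |Real.tanh t| ≤ 1 := by
  have hc := Real.cosh_pos t
  rw [Real.tanh_eq_sinh_div_cosh, abs_div, abs_of_pos hc, div_le_one hc, abs_le]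
  have h1 := Real.cosh_sub_sinh t
  have h2 := Real.cosh_add_sinh t
  have e1 := Real.exp_pos (-t)
  have e2 := Real.exp_pos t
  constructor <;> linarith

lemma key_identity (σ z x : ℝ) (hσ : 0 < σ) :
    ProbabilityTheory.gaussianPDFReal z ⟨σ ^ 2, sq_nonneg σ⟩ x *
      Real.exp (-(z * x / σ ^ 2)) =
    Real.exp (-z ^ 2 / (2 * σ ^ 2)) *
      ProbabilityTheory.gaussianPDFReal 0 ⟨σ ^ 2, sq_nonneg σ⟩ x := by
  simp only [ProbabilityTheory.gaussianPDFReal, NNReal.coe_mk]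
  have hσ2 : (σ:ℝ) ^ 2 ≠ 0 := by positivity
  have h : -(x - z) ^ 2 / (2 * σ ^ 2) + -(z * x / σ ^ 2)
      = -z ^ 2 / (2 * σ ^ 2) + -(x - 0) ^ 2 / (2 * σ ^ 2) := by
    field_simp
    ring
  show (Real.sqrt (2 * π * σ ^ 2))⁻¹ * Real.exp (-(x - z) ^ 2 / (2 * σ ^ 2)) *
      Real.exp (-(z * x / σ ^ 2)) = Real.exp (-z ^ 2 / (2 * σ ^ 2)) *
      ((Real.sqrt (2 * π * σ ^ 2))⁻¹ * Real.exp (-(x - 0) ^ 2 / (2 * σ ^ 2)))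
  rw [mul_assoc, ← Real.exp_add, h, Real.exp_add]
  ring

/-- Gaussian contraction factor: for a Gaussian random variable `X` with
mean `z > 0` and variance `σ²`, `E[1 - tanh(zX/σ²)] ≤ exp(-z²/(2σ²))`; consequently for the
standard Gaussian member of `F` (i.e. `g(t) = t²/2`, `C = √(2π)`), the LS-EM contraction
factor satisfies `κ(β*, β, σ) ≤ exp(-min(β, β*)²/(2σ²))` for all `β, β* > 0`. -/
theorem stmt2 (σ : ℝ) (hσ : 0 < σ) :
    (∀ z : ℝ, 0 < z →
      (∫ x : ℝ, ProbabilityTheory.gaussianPDFReal z ⟨σ ^ 2, sq_nonneg σ⟩ x *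
          (1 - Real.tanh (z * x / σ ^ 2))) ≤ Real.exp (-z ^ 2 / (2 * σ ^ 2))) ∧
    (∀ β βs : ℝ, 0 < β → 0 < βs →
      kappa (fun t => t ^ 2 / 2) (Real.sqrt (2 * π)) σ βs β ≤
        Real.exp (-(min β βs) ^ 2 / (2 * σ ^ 2))) := by
  have hσ2 : (σ:ℝ) ^ 2 ≠ 0 := by positivity
  have hv : (⟨σ ^ 2, sq_nonneg σ⟩ : NNReal) ≠ 0 := by
    simp [← NNReal.coe_ne_zero, hσ2]
  have part1 : ∀ z : ℝ, 0 < z →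
      (∫ x : ℝ, ProbabilityTheory.gaussianPDFReal z ⟨σ ^ 2, sq_nonneg σ⟩ x *
          (1 - Real.tanh (z * x / σ ^ 2))) ≤ Real.exp (-z ^ 2 / (2 * σ ^ 2)) := by
    intro z hz
    have hint1 : Integrable (fun x : ℝ =>
        ProbabilityTheory.gaussianPDFReal z ⟨σ ^ 2, sq_nonneg σ⟩ x *
          (1 - Real.tanh (z * x / σ ^ 2))) := by
      have h := (ProbabilityTheory.integrable_gaussianPDFReal z
        ⟨σ ^ 2, sq_nonneg σ⟩).bdd_mul (c := 2)
        (f := fun x => 1 - Real.tanh (z * x / σ ^ 2))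
        ((continuous_const.sub (continuous_tanh'.comp
          ((continuous_const.mul continuous_id).div_const _))).aestronglyMeasurable) ?_
      · simpa [mul_comm] using h
      · filter_upwards with x
        have h1 := abs_tanh_le (z * x / σ ^ 2)
        rw [Real.norm_eq_abs]
        rw [abs_le] at h1 ⊢
        exact ⟨by linarith [h1.2], by linarith [h1.1]⟩
    have hint2 : Integrable (fun x : ℝ =>
        ProbabilityTheory.gaussianPDFReal z ⟨σ ^ 2, sq_nonneg σ⟩ x *
          Real.exp (-(z * x / σ ^ 2))) := by
      simp only [fun x => key_identity σ z x hσ]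
      exact (ProbabilityTheory.integrable_gaussianPDFReal 0 _).const_mul _
    calc (∫ x : ℝ, ProbabilityTheory.gaussianPDFReal z ⟨σ ^ 2, sq_nonneg σ⟩ x *
          (1 - Real.tanh (z * x / σ ^ 2)))
        ≤ ∫ x : ℝ, ProbabilityTheory.gaussianPDFReal z ⟨σ ^ 2, sq_nonneg σ⟩ x *
          Real.exp (-(z * x / σ ^ 2)) := by
          apply integral_mono hint1 hint2
          intro x
          exact mul_le_mul_of_nonneg_left (tanh_bound _)
            (ProbabilityTheory.gaussianPDFReal_nonneg _ _ _)
      _ = Real.exp (-z ^ 2 / (2 * σ ^ 2)) := by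
          simp only [fun x => key_identity σ z x hσ]
          rw [integral_const_mul, ProbabilityTheory.integral_gaussianPDFReal_eq_one 0 hv,
            mul_one]
  refine ⟨part1, ?_⟩
  intro β βs hβ hβs
  set z := min β βs with hzdef
  have hz : 0 < z := lt_min hβ hβs
  have hminabs : min |β| |βs| = z := by
    rw [abs_of_pos hβ, abs_of_pos hβs]
  have hkey : kappa (fun t => t ^ 2 / 2) (Real.sqrt (2 * π)) σ βs β =
      ∫ x : ℝ, ProbabilityTheory.gaussianPDFReal z ⟨σ ^ 2, sq_nonneg σ⟩ x *
        (1 - Real.tanh (z * x / σ ^ 2)) := by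
    unfold kappa
    rw [hminabs]
    congr 1
    funext x
    have hd : densLS (fun t => t ^ 2 / 2) (Real.sqrt (2 * π)) σ z x =
        ProbabilityTheory.gaussianPDFReal z ⟨σ ^ 2, sq_nonneg σ⟩ x := by
      unfold densLS dens
      simp only [ProbabilityTheory.gaussianPDFReal, NNReal.coe_mk]
      rw [sq_abs]
      have hs : Real.sqrt (2 * π * σ ^ 2) = Real.sqrt (2 * π) * σ := by
        rw [Real.sqrt_mul (by positivity), Real.sqrt_sq hσ.le]
      show 1 / σ * (1 / Real.sqrt (2 * π) * Real.exp (-(((x - z) / σ) ^ 2 / 2))) =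
        (Real.sqrt (2 * π * σ ^ 2))⁻¹ * Real.exp (-(x - z) ^ 2 / (2 * σ ^ 2))
      rw [hs]
      have h2π : (0:ℝ) < Real.sqrt (2 * π) := Real.sqrt_pos.mpr (by positivity)
      rw [mul_inv, div_pow]
      field_simp
    have hF : Ffun (fun t => t ^ 2 / 2) σ z x / 2 = z * x / σ ^ 2 := by
      unfold Ffun
      simp only [div_pow, sq_abs]
      field_simp
      ring
    rw [hd, hF]
  rw [hkey]
  exact part1 z hz
end
end

section
/- For every z > 0, the integral ∫_ℝ [exp(−|x−z|)·exp(−|x+z|)] / [exp(−|x−z|) + exp(−|x+z|)] dx is at most 2·exp(−z)/(1 + exp(−2z)). Consequently, for the Laplace density with scale σ₀ = 1/√2 (so that f(x) = (1/(2σ₀))·exp(−|x|/σ₀) has unit variance and lies in the class F), the LS-EM contraction factor satisfies κ(β*, β, σ) ≤ 2·exp(−√2·z/σ)/(1 + exp(−2√2·z/σ)) with z = min(β, β*), for all β, β* > 0. -/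
open MeasureTheory Real Filter

noncomputable section

open Set in
lemma ratio_eq (a b : ℝ) :
    Real.exp (-a) * Real.exp (-b) / (Real.exp (-a) + Real.exp (-b)) =
      (Real.exp a + Real.exp b)⁻¹ := by
  rw [Real.exp_neg, Real.exp_neg]
  have ha := (Real.exp_pos a).ne'
  have hb := (Real.exp_pos b).ne'
  have h : (0:ℝ) < Real.exp a + Real.exp b := by positivity
  field_simp
  ring


open Set in
lemma one_sub_tanh (u : ℝ) : 1 - Real.tanh (u/2) = 2 / (Real.exp u + 1) := by
  have h2 : Real.exp (u/2) * Real.exp (u/2) = Real.exp u := by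
    rw [← Real.exp_add]; ring_nf
  rw [Real.tanh_eq_sinh_div_cosh, Real.sinh_eq, Real.cosh_eq, Real.exp_neg]
  have he := (Real.exp_pos (u/2)).ne'
  have hc : (0:ℝ) < Real.exp (u/2) + (Real.exp (u/2))⁻¹ := by positivity
  have hu : (0:ℝ) < Real.exp u + 1 := by positivity
  field_simp
  nlinarith [h2, Real.exp_pos (u/2), Real.exp_pos u]


open Set in
lemma part1 (z : ℝ) (hz : 0 < z) :
    (∫ x : ℝ, Real.exp (-|x - z|) * Real.exp (-|x + z|) /
        (Real.exp (-|x - z|) + Real.exp (-|x + z|))) ≤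
      2 * Real.exp (-z) / (1 + Real.exp (-2 * z)) := by
  set f1 : ℝ → ℝ := fun x => Real.exp (-z) * (2 * Real.exp x / (Real.exp x + 1)^2) with hf1
  set f2 : ℝ → ℝ := fun x => Real.exp (-x) / (Real.exp z + Real.exp (-z)) with hf2
  set f3 : ℝ → ℝ := fun x => Real.exp x / (Real.exp z + Real.exp (-z)) with hf3
  have hcz : (0:ℝ) < Real.exp z + Real.exp (-z) := by positivity
  have hnn1 : ∀ x, 0 ≤ (Icc (-z) z).indicator f1 x :=
    fun x => indicator_nonneg (fun y _ => by have := Real.exp_pos y; positivity) x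
  have hnn2 : ∀ x, 0 ≤ (Ioi z).indicator f2 x :=
    fun x => indicator_nonneg (fun y _ => by have := Real.exp_pos (-y); positivity) x
  have hnn3 : ∀ x, 0 ≤ (Iio (-z)).indicator f3 x :=
    fun x => indicator_nonneg (fun y _ => by have := Real.exp_pos y; positivity) x
  have hc1 : Continuous f1 := by
    apply Continuous.mul continuous_const
    exact (continuous_const.mul Real.continuous_exp).div
      ((Real.continuous_exp.add continuous_const).pow 2) (fun x => by positivity)
  have hI1 : Integrable ((Icc (-z) z).indicator f1) :=
    (hc1.integrableOn_Icc).integrable_indicator measurableSet_Icc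
  have hexpneg : IntegrableOn (fun x : ℝ => Real.exp (-x)) (Ioi z) := by
    simpa using exp_neg_integrableOn_Ioi z one_pos
  have hI2 : Integrable ((Ioi z).indicator f2) :=
    IntegrableOn.integrable_indicator (hexpneg.div_const _) measurableSet_Ioi
  have hexpIio : IntegrableOn Real.exp (Iio (-z)) :=
    (integrableOn_exp_Iic (-z)).mono_set Iio_subset_Iic_self
  have hI3 : Integrable ((Iio (-z)).indicator f3) :=
    IntegrableOn.integrable_indicator (hexpIio.div_const _) measurableSet_Iio
  have hmono : (∫ x : ℝ, Real.exp (-|x - z|) * Real.exp (-|x + z|) /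
        (Real.exp (-|x - z|) + Real.exp (-|x + z|))) ≤
      ∫ x : ℝ, ((Icc (-z) z).indicator f1 x + (Ioi z).indicator f2 x
        + (Iio (-z)).indicator f3 x) := by
    apply integral_mono_of_nonneg
    · filter_upwards with x; positivity
    · exact (hI1.add hI2).add hI3
    · filter_upwards with x
      rw [ratio_eq]
      rcases lt_or_ge x (-z) with hx | hx
      · have h1 : |x - z| = z - x := by rw [abs_of_nonpos (by linarith)]; ring
        have h2 : |x + z| = -(x + z) := abs_of_nonpos (by linarith)
        have key : (Real.exp |x - z| + Real.exp |x + z|)⁻¹ = f3 x := by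
          rw [h1, h2]
          have hsum : Real.exp (z - x) + Real.exp (-(x+z))
              = Real.exp (-x) * (Real.exp z + Real.exp (-z)) := by
            rw [mul_add, ← Real.exp_add, ← Real.exp_add]; ring_nf
          rw [hsum, mul_inv]
          show (Real.exp (-x))⁻¹ * (Real.exp z + Real.exp (-z))⁻¹
            = Real.exp x / (Real.exp z + Real.exp (-z))
          rw [Real.exp_neg x, inv_inv, div_eq_mul_inv]
        rw [key, ← Set.indicator_of_mem (Set.mem_Iio.mpr hx) f3]
        linarith [hnn1 x, hnn2 x]
      · rcases lt_or_ge z x with hx2 | hx2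
        · have h1 : |x - z| = x - z := abs_of_nonneg (by linarith)
          have h2 : |x + z| = x + z := abs_of_nonneg (by linarith)
          have key : (Real.exp |x - z| + Real.exp |x + z|)⁻¹ = f2 x := by
            rw [h1, h2]
            have hsum : Real.exp (x - z) + Real.exp (x+z)
                = Real.exp x * (Real.exp z + Real.exp (-z)) := by
              rw [mul_add, ← Real.exp_add, ← Real.exp_add]; ring_nf
            rw [hsum, mul_inv]
            show (Real.exp x)⁻¹ * (Real.exp z + Real.exp (-z))⁻¹
              = Real.exp (-x) / (Real.exp z + Real.exp (-z))
            rw [Real.exp_neg x, div_eq_mul_inv]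
          rw [key, ← Set.indicator_of_mem (Set.mem_Ioi.mpr hx2) f2]
          linarith [hnn1 x, hnn3 x]
        · have h1 : |x - z| = z - x := by rw [abs_of_nonpos (by linarith)]; ring
          have h2 : |x + z| = x + z := abs_of_nonneg (by linarith)
          have hmem : x ∈ Icc (-z) z := ⟨hx, hx2⟩
          have key : (Real.exp |x - z| + Real.exp |x + z|)⁻¹ ≤ f1 x := by
            rw [h1, h2]
            set s := Real.exp x with hs
            set t := Real.exp z with ht
            have hs0 : 0 < s := Real.exp_pos x
            have ht0 : 0 < t := Real.exp_pos z
            have hsum : Real.exp (z - x) + Real.exp (x+z) = t * (1 + s^2) / s := by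
              rw [Real.exp_sub, Real.exp_add, ← hs, ← ht]; field_simp
            have hez : Real.exp (-z) = t⁻¹ := by rw [Real.exp_neg, ht]
            rw [hsum]
            show (t * (1 + s^2) / s)⁻¹ ≤ Real.exp (-z) * (2 * s / (s + 1)^2)
            rw [hez, inv_div, div_le_iff₀ (by positivity)]
            have hrw : t⁻¹ * (2*s/(s+1)^2) * (t*(1+s^2)) = 2*s*(1+s^2)/(s+1)^2 := by
              field_simp
            rw [hrw, le_div_iff₀ (by positivity)]
            nlinarith [mul_nonneg hs0.le (sq_nonneg (s-1))]
          refine le_trans key ?_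
          rw [← Set.indicator_of_mem hmem f1]
          linarith [hnn2 x, hnn3 x]
  have hI12 : Integrable (fun x => (Icc (-z) z).indicator f1 x + (Ioi z).indicator f2 x) :=
    hI1.add hI2
  have hsplit : (∫ x : ℝ, ((Icc (-z) z).indicator f1 x + (Ioi z).indicator f2 x
        + (Iio (-z)).indicator f3 x))
      = (∫ x : ℝ, (Icc (-z) z).indicator f1 x) + (∫ x : ℝ, (Ioi z).indicator f2 x)
        + (∫ x : ℝ, (Iio (-z)).indicator f3 x) := by
    rw [integral_add hI12 hI3, integral_add hI1 hI2]
  have hA : (∫ x : ℝ, (Icc (-z) z).indicator f1 x)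
      = Real.exp (-z) * (2/(Real.exp (-z)+1) - 2/(Real.exp z+1)) := by
    rw [integral_indicator measurableSet_Icc, integral_Icc_eq_integral_Ioc,
      ← intervalIntegral.integral_of_le (by linarith : -z ≤ z)]
    have hFTC : ∀ x ∈ Set.uIcc (-z) z,
        HasDerivAt (fun y => Real.exp (-z) * (-2 * (Real.exp y + 1)⁻¹)) (f1 x) x := by
      intro x _
      have h1 : HasDerivAt (fun y => Real.exp y + 1) (Real.exp x) x :=
        (Real.hasDerivAt_exp x).add_const 1
      have h2 := ((h1.inv (by positivity)).const_mul (-2 : ℝ)).const_mul (Real.exp (-z))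
      refine h2.congr_deriv (Eq.symm ?_)
      rw [hf1]
      have hx := (Real.exp_pos x).ne'
      field_simp
    rw [intervalIntegral.integral_eq_sub_of_hasDerivAt hFTC (hc1.intervalIntegrable _ _)]
    rw [div_eq_mul_inv, div_eq_mul_inv]
    ring
  have hB : (∫ x : ℝ, (Ioi z).indicator f2 x)
      = Real.exp (-z) / (Real.exp z + Real.exp (-z)) := by
    rw [integral_indicator measurableSet_Ioi, hf2, integral_div, integral_exp_neg_Ioi]
  have hC : (∫ x : ℝ, (Iio (-z)).indicator f3 x)
      = Real.exp (-z) / (Real.exp z + Real.exp (-z)) := by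
    rw [integral_indicator measurableSet_Iio, hf3, integral_div,
      ← integral_Iic_eq_integral_Iio, integral_exp_Iic]
  have hfinal : Real.exp (-z) * (2/(Real.exp (-z)+1) - 2/(Real.exp z+1))
      + Real.exp (-z)/(Real.exp z + Real.exp (-z))
      + Real.exp (-z)/(Real.exp z + Real.exp (-z))
      ≤ 2 * Real.exp (-z) / (1 + Real.exp (-2*z)) := by
    have hu0 : 0 < Real.exp (-z) := Real.exp_pos _
    have hu1 : Real.exp (-z) < 1 := by
      rw [Real.exp_lt_one_iff]; linarith
    have hez : Real.exp z = (Real.exp (-z))⁻¹ := by rw [Real.exp_neg, inv_inv]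
    have h2z : Real.exp (-2*z) = (Real.exp (-z))^2 := by
      rw [sq, ← Real.exp_add]; ring_nf
    rw [hez, h2z]
    set u := Real.exp (-z) with hu
    have hd1 : (0:ℝ) < u + 1 := by linarith
    have hne : u ≠ 0 := hu0.ne'
    have e : 2*u/(1+u^2) - (u * (2/(u+1) - 2/(u⁻¹+1)) + u/(u⁻¹+u) + u/(u⁻¹+u))
        = 2*u^2*(1-u)^2/((1+u)*(1+u^2)) := by
      field_simp
      ring
    have hpos : (0:ℝ) ≤ 2*u^2*(1-u)^2/((1+u)*(1+u^2)) := by positivity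
    linarith [e, hpos]
  rw [hsplit, hA, hB, hC] at hmono
  linarith [hfinal]

open Set in
lemma integrand_eq (σ : ℝ) (hσ : 0 < σ) (z x : ℝ) :
    densLS (fun t => Real.sqrt 2 * t) (Real.sqrt 2) σ z x *
      (1 - Real.tanh (Ffun (fun t => Real.sqrt 2 * t) σ z x / 2)) =
    (Real.sqrt 2 / σ) *
      (Real.exp (-|Real.sqrt 2 / σ * x - Real.sqrt 2 * z / σ|) *
       Real.exp (-|Real.sqrt 2 / σ * x + Real.sqrt 2 * z / σ|) /
       (Real.exp (-|Real.sqrt 2 / σ * x - Real.sqrt 2 * z / σ|) +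
        Real.exp (-|Real.sqrt 2 / σ * x + Real.sqrt 2 * z / σ|))) := by
  have hs2 : (0:ℝ) < Real.sqrt 2 := by positivity
  have hss : Real.sqrt 2 * Real.sqrt 2 = 2 := Real.mul_self_sqrt (by norm_num)
  have e1 : |Real.sqrt 2/σ*x + Real.sqrt 2*z/σ| = Real.sqrt 2 * (|x+z|/σ) := by
    rw [show Real.sqrt 2/σ*x + Real.sqrt 2*z/σ = (Real.sqrt 2/σ)*(x+z) by ring,
      abs_mul, abs_of_pos (by positivity)]
    ring
  have e2 : |Real.sqrt 2/σ*x - Real.sqrt 2*z/σ| = Real.sqrt 2 * (|x-z|/σ) := by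
    rw [show Real.sqrt 2/σ*x - Real.sqrt 2*z/σ = (Real.sqrt 2/σ)*(x-z) by ring,
      abs_mul, abs_of_pos (by positivity)]
    ring
  have e3 : |(x - z)/σ| = |x-z|/σ := by rw [abs_div, abs_of_pos hσ]
  rw [densLS, dens, Ffun, e1, e2, e3]
  rw [one_sub_tanh, ratio_eq, Real.exp_sub]
  set A := |x+z|/σ
  set B := |x-z|/σ
  have hpA := Real.exp_pos (Real.sqrt 2 * A)
  have hpB := Real.exp_pos (Real.sqrt 2 * B)
  rw [Real.exp_neg]
  field_simp
  ring_nf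
  rw [Real.sq_sqrt (by norm_num : (0:ℝ) ≤ 2)]
  ring

open Set in
theorem part2 (σ : ℝ) (hσ : 0 < σ) (β βs : ℝ) (hβ : 0 < β) (hβs : 0 < βs) :
    kappa (fun t => Real.sqrt 2 * t) (Real.sqrt 2) σ βs β ≤
      2 * Real.exp (-(Real.sqrt 2 * min β βs) / σ) /
        (1 + Real.exp (-(2 * Real.sqrt 2 * min β βs) / σ)) := by
  have hz : 0 < min β βs := lt_min hβ hβs
  have habs : min |β| |βs| = min β βs := by rw [abs_of_pos hβ, abs_of_pos hβs]
  set z := min β βs with hzdef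
  set w := Real.sqrt 2 * z / σ with hw
  have hs2 : (0:ℝ) < Real.sqrt 2 := by positivity
  have hw0 : 0 < w := by positivity
  have key : kappa (fun t => Real.sqrt 2 * t) (Real.sqrt 2) σ βs β
      = ∫ y : ℝ, Real.exp (-|y - w|) * Real.exp (-|y + w|) /
          (Real.exp (-|y - w|) + Real.exp (-|y + w|)) := by
    rw [kappa, habs]
    have hcongr : ∀ x : ℝ, densLS (fun t => Real.sqrt 2 * t) (Real.sqrt 2) σ z x *
        (1 - Real.tanh (Ffun (fun t => Real.sqrt 2 * t) σ z x / 2))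
        = (Real.sqrt 2 / σ) *
          ((fun y => Real.exp (-|y - w|) * Real.exp (-|y + w|) /
            (Real.exp (-|y - w|) + Real.exp (-|y + w|))) (Real.sqrt 2 / σ * x)) :=
      fun x => integrand_eq σ hσ z x
    rw [integral_congr_ae (Filter.Eventually.of_forall hcongr)]
    have hcv := MeasureTheory.Measure.integral_comp_mul_left
      (fun y => Real.exp (-|y - w|) * Real.exp (-|y + w|) /
        (Real.exp (-|y - w|) + Real.exp (-|y + w|))) (Real.sqrt 2 / σ)
    rw [MeasureTheory.integral_const_mul, hcv]
    rw [smul_eq_mul, abs_inv, abs_of_pos (by positivity), ← mul_assoc,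
      mul_inv_cancel₀ (by positivity : (Real.sqrt 2 / σ) ≠ 0), one_mul]
  rw [key]
  refine le_trans (part1 w hw0) (le_of_eq ?_)
  rw [hw]
  ring_nf



/-- Laplace contraction factor: the stated integral bound for every
`z > 0`, and consequently for the unit-variance Laplace member of `F` (scale `σ₀ = 1/√2`,
i.e. `g(t) = √2 t`, `C = √2`), the LS-EM contraction factor satisfies
`κ(β*, β, σ) ≤ 2 exp(-√2 z/σ)/(1 + exp(-2√2 z/σ))` with `z = min(β, β*)`,
for all `β, β* > 0`. -/
theorem stmt3 (σ : ℝ) (hσ : 0 < σ) :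
    (∀ z : ℝ, 0 < z →
      (∫ x : ℝ, Real.exp (-|x - z|) * Real.exp (-|x + z|) /
          (Real.exp (-|x - z|) + Real.exp (-|x + z|))) ≤
        2 * Real.exp (-z) / (1 + Real.exp (-2 * z))) ∧
    (∀ β βs : ℝ, 0 < β → 0 < βs →
      kappa (fun t => Real.sqrt 2 * t) (Real.sqrt 2) σ βs β ≤
        2 * Real.exp (-(Real.sqrt 2 * min β βs) / σ) /
          (1 + Real.exp (-(2 * Real.sqrt 2 * min β βs) / σ))) := by
  exact ⟨fun z hz => part1 z hz, fun β βs hβ hβs => part2 σ hσ β βs hβ hβs⟩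
end
end

section
/- Let f(x) = exp(x)/(1 + exp(x))² be the standard logistic density. For every z > 0, the quantity 2·∫_ℝ [f(x−z)·f(x+z)] / [f(x−z) + f(x+z)] dx is at most 4/(exp(z) + exp(−z) + 2), which is strictly less than 1. Consequently, for the logistic density with scale σ₀ = √3/π (unit variance, class F), the LS-EM contraction factor satisfies κ(β*, β, σ) ≤ 4·exp(−πz/(σ√3)) / (1 + exp(−2πz/(σ√3)) + 2·exp(−πz/(σ√3))) with z = min(β, β*), for all β, β* > 0. -/
open MeasureTheory Real Filter

noncomputable section

lemma integrable_exp_neg_abs' {c : ℝ} (hc : 0 < c) :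
    Integrable (fun x : ℝ => Real.exp (-(c * |x|))) := by
  set g : ℝ → ℝ := fun x => Real.exp (-(c * |x|)) with hg
  have h1 : IntegrableOn g (Set.Ioi 0) := by
    refine (exp_neg_integrableOn_Ioi 0 hc).congr_fun (fun x hx => ?_) measurableSet_Ioi
    simp [hg, abs_of_pos (show (0:ℝ) < x from hx)]
  have h1i : Integrable ((Set.Ioi (0:ℝ)).indicator g) :=
    h1.integrable_indicator measurableSet_Ioi
  have h2i : Integrable ((Set.Iio (0:ℝ)).indicator g) := by
    have h := h1i.comp_neg
    convert h using 1
    funext x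
    by_cases hx : x < 0
    · simp [Set.indicator, hx, not_lt.2 hx.le, hg, abs_neg, neg_pos.2 hx]
    · simp [Set.indicator, hx, hg, abs_neg, neg_pos]
  have h2 : IntegrableOn g (Set.Iic 0) :=
    ((integrable_indicator_iff measurableSet_Iio).1 h2i).congr_set_ae Iio_ae_eq_Iic.symm
  have h3 : IntegrableOn g (Set.Iic 0 ∪ Set.Ioi 0) := h2.union h1
  rwa [Set.Iic_union_Ioi, integrableOn_univ] at h3

lemma integrable_inv_one_add_cosh {c : ℝ} (hc : 0 < c) :
    Integrable (fun x : ℝ => 1 / (1 + Real.cosh (x / c))) := by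
  have hcont : Continuous fun x : ℝ => 1 / (1 + Real.cosh (x / c)) := by
    apply Continuous.div continuous_const
    · exact continuous_const.add (Real.continuous_cosh.comp (continuous_id.div_const c))
    · intro x; positivity
  refine ((integrable_exp_neg_abs' (show (0:ℝ) < 1/c by positivity)).const_mul 2).mono'
    hcont.aestronglyMeasurable (ae_of_all _ fun x => ?_)
  rw [Real.norm_eq_abs, abs_of_nonneg (by positivity)]
  have h1 : Real.exp (|x| / c) / 2 ≤ Real.cosh (x / c) := by
    rcases abs_cases x with ⟨h, _⟩ | ⟨h, _⟩
    · rw [h]; rw [Real.cosh_eq]; nlinarith [Real.exp_pos (-(x/c))]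
    · rw [h, neg_div]; rw [Real.cosh_eq]; nlinarith [Real.exp_pos (x/c)]
  have h2 : Real.exp (|x| / c) / 2 ≤ 1 + Real.cosh (x/c) := by
    nlinarith [Real.cosh_pos (x/c)]
  have h3 : 0 < Real.exp (|x|/c) / 2 := by positivity
  calc 1 / (1 + Real.cosh (x / c)) ≤ 1 / (Real.exp (|x|/c)/2) := by
        apply one_div_le_one_div_of_le h3 h2
    _ = 2 * Real.exp (-(1/c * |x|)) := by
        rw [one_div_div, div_eq_mul_inv, ← Real.exp_neg]
        ring_nf

lemma integral_inv_one_add_cosh {c : ℝ} (hc : 0 < c) :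
    ∫ x : ℝ, 1 / (1 + Real.cosh (x / c)) = 2 * c := by
  have hderiv : ∀ x : ℝ, HasDerivAt (fun x : ℝ => 2 * c / (1 + Real.exp (-(x / c))))
      (1 / (1 + Real.cosh (x / c))) x := by
    intro x
    have h1 : HasDerivAt (fun x : ℝ => -(x / c)) (-(1 / c)) x := by
      simpa using ((hasDerivAt_id x).div_const c).fun_neg
    have h2 : HasDerivAt (fun x : ℝ => 1 + Real.exp (-(x / c)))
        (Real.exp (-(x / c)) * (-(1 / c))) x :=
      ((Real.hasDerivAt_exp _).comp x h1).const_add 1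
    have hne : (1 : ℝ) + Real.exp (-(x / c)) ≠ 0 := by positivity
    have h3 := (hasDerivAt_const x (2 * c)).fun_div h2 hne
    refine h3.congr_deriv (Eq.symm ?_)
    rw [Real.cosh_eq, Real.exp_neg]
    have he := Real.exp_ne_zero (x / c)
    field_simp
    ring
  have hint := integrable_inv_one_add_cosh hc
  have htop : Tendsto (fun x : ℝ => 2 * c / (1 + Real.exp (-(x / c)))) atTop (nhds (2 * c)) := by
    have h0 : Tendsto (fun x : ℝ => -(x / c)) atTop atBot := by
      exact tendsto_neg_atTop_atBot.comp (Tendsto.atTop_div_const hc tendsto_id)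
    have := (Real.tendsto_exp_atBot.comp h0).const_add 1
    have := Tendsto.div (tendsto_const_nhds (x := (2*c))) (by simpa using this) (by norm_num)
    simpa [Pi.div_def] using this
  have hbot : Tendsto (fun x : ℝ => 2 * c / (1 + Real.exp (-(x / c)))) atBot (nhds 0) := by
    have h0 : Tendsto (fun x : ℝ => -(x / c)) atBot atTop :=
      tendsto_neg_atBot_atTop.comp (Tendsto.atBot_div_const hc tendsto_id)
    have h1 := Real.tendsto_exp_atTop.comp h0
    have h2 : Tendsto (fun x : ℝ => 1 + Real.exp (-(x / c))) atBot atTop := by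
      simpa using tendsto_atTop_add_const_left _ 1 h1
    have := Tendsto.div_atTop (tendsto_const_nhds (x := (2*c))) h2
    simpa using this
  have := MeasureTheory.integral_of_hasDerivAt_of_tendsto hderiv hint hbot htop
  rw [this]; ring

lemma my_integral_mono {φ ψ : ℝ → ℝ} (hφc : Continuous φ) (h0 : ∀ x, 0 ≤ φ x)
    (hle : ∀ x, φ x ≤ ψ x) (hψ : Integrable ψ) : ∫ x, φ x ≤ ∫ x, ψ x := by
  have hφ : Integrable φ := hψ.mono' hφc.aestronglyMeasurable
    (ae_of_all _ fun x => by rw [Real.norm_eq_abs, abs_of_nonneg (h0 x)]; exact hle x)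
  exact integral_mono hφ hψ hle

lemma core_bound {c : ℝ} (w : ℝ) (hc : 0 < c) :
    ∫ x : ℝ, 1 / (2 * c * (1 + Real.cosh (x / c) * Real.cosh w)) ≤ 2 / (1 + Real.cosh w) := by
  have hw : 1 ≤ Real.cosh w := Real.one_le_cosh w
  have hψint : Integrable (fun x : ℝ =>
      (1 / (c * (1 + Real.cosh w))) * (1 / (1 + Real.cosh (x / c)))) :=
    (integrable_inv_one_add_cosh hc).const_mul _
  have hψval : ∫ x : ℝ, (1 / (c * (1 + Real.cosh w))) * (1 / (1 + Real.cosh (x / c)))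
      = 2 / (1 + Real.cosh w) := by
    rw [MeasureTheory.integral_const_mul, integral_inv_one_add_cosh hc]
    field_simp
  rw [← hψval]
  apply my_integral_mono
  · refine Continuous.div continuous_const (by fun_prop) fun x => ne_of_gt ?_
    have hA := Real.one_le_cosh (x / c)
    have h1 : (0:ℝ) < Real.cosh (x / c) * Real.cosh w := mul_pos (by linarith) (by linarith)
    have h2 : (0:ℝ) < 2 * c := by linarith
    exact mul_pos h2 (by linarith)
  · intro x
    have hA := Real.one_le_cosh (x / c)
    have h1 : (0:ℝ) < Real.cosh (x / c) * Real.cosh w := mul_pos (by linarith) (by linarith)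
    have h2 : 0 < 2 * c * (1 + Real.cosh (x / c) * Real.cosh w) :=
      mul_pos (by linarith) (by linarith)
    positivity
  · intro x
    have hA : 1 ≤ Real.cosh (x / c) := Real.one_le_cosh _
    have heq : (1 / (c * (1 + Real.cosh w))) * (1 / (1 + Real.cosh (x / c)))
        = 1 / (c * (1 + Real.cosh w) * (1 + Real.cosh (x / c))) := by
      rw [div_mul_div_comm, one_mul]
    rw [heq]
    have h1 : (0:ℝ) < c * (1 + Real.cosh w) := mul_pos hc (by linarith)
    refine one_div_le_one_div_of_le (mul_pos h1 (by linarith)) ?_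
    nlinarith [mul_nonneg (mul_nonneg hc.le (sub_nonneg.2 hA)) (sub_nonneg.2 hw)]
  · exact hψint

lemma part1_eq (z x : ℝ) :
    (Real.exp (x - z) / (1 + Real.exp (x - z)) ^ 2) *
        (Real.exp (x + z) / (1 + Real.exp (x + z)) ^ 2) /
      (Real.exp (x - z) / (1 + Real.exp (x - z)) ^ 2 +
        Real.exp (x + z) / (1 + Real.exp (x + z)) ^ 2)
    = 1 / (4 * (1 + Real.cosh x * Real.cosh z)) := by
  have hB : Real.exp (x - z) / (1 + Real.exp (x - z)) ^ 2 +
      Real.exp (x + z) / (1 + Real.exp (x + z)) ^ 2 ≠ 0 := by positivity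
  have h1 : (1 + Real.exp (x - z)) ≠ 0 := by positivity
  have h2 : (1 + Real.exp (x + z)) ≠ 0 := by positivity
  have hu : Real.exp x ≠ 0 := Real.exp_ne_zero x
  have hv : Real.exp z ≠ 0 := Real.exp_ne_zero z
  have hC : (1:ℝ) + Real.cosh x * Real.cosh z ≠ 0 := by
    have := Real.one_le_cosh x; have := Real.one_le_cosh z
    nlinarith
  rw [div_add_div _ _ (pow_ne_zero 2 h1) (pow_ne_zero 2 h2), div_div_eq_mul_div]
  have hN : Real.exp (x - z) * (1 + Real.exp (x + z)) ^ 2 +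
      (1 + Real.exp (x - z)) ^ 2 * Real.exp (x + z) ≠ 0 := by positivity
  rw [Real.cosh_eq, Real.cosh_eq, Real.exp_neg, Real.exp_neg, Real.exp_sub, Real.exp_add] at *
  field_simp
  ring

lemma part1a (z : ℝ) :
    (2 * ∫ x : ℝ,
        (Real.exp (x - z) / (1 + Real.exp (x - z)) ^ 2) *
          (Real.exp (x + z) / (1 + Real.exp (x + z)) ^ 2) /
        (Real.exp (x - z) / (1 + Real.exp (x - z)) ^ 2 +
          Real.exp (x + z) / (1 + Real.exp (x + z)) ^ 2)) ≤
      4 / (Real.exp z + Real.exp (-z) + 2) := by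
  rw [← MeasureTheory.integral_const_mul]
  have heq : (fun x : ℝ => 2 *
      ((Real.exp (x - z) / (1 + Real.exp (x - z)) ^ 2) *
          (Real.exp (x + z) / (1 + Real.exp (x + z)) ^ 2) /
        (Real.exp (x - z) / (1 + Real.exp (x - z)) ^ 2 +
          Real.exp (x + z) / (1 + Real.exp (x + z)) ^ 2)))
      = fun x : ℝ => 1 / (2 * 1 * (1 + Real.cosh (x / 1) * Real.cosh z)) := by
    funext x
    have hC : (0:ℝ) < 1 + Real.cosh x * Real.cosh z := by
      nlinarith [Real.one_le_cosh x, Real.one_le_cosh z]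
    have hC' := ne_of_gt hC
    rw [part1_eq, div_one]
    field_simp
    ring
  rw [heq]
  have h := core_bound z one_pos
  have hrhs : 2 / (1 + Real.cosh z) = 4 / (Real.exp z + Real.exp (-z) + 2) := by
    rw [Real.cosh_eq, div_eq_div_iff (by nlinarith [Real.cosh_pos z, Real.cosh_eq z])
      (by positivity)]
    ring
  linarith [h, hrhs.le, hrhs.ge]

lemma part1b (z : ℝ) (hz : 0 < z) : 4 / (Real.exp z + Real.exp (-z) + 2) < 1 := by
  have ha : 1 < Real.exp z := by nlinarith [Real.add_one_le_exp z]
  have hb : 0 < Real.exp (-z) := Real.exp_pos _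
  have hprod : Real.exp z * Real.exp (-z) = 1 := by
    rw [← Real.exp_add]; simp
  rw [div_lt_one (by positivity)]
  nlinarith [mul_pos hb (mul_pos (sub_pos.2 ha) (sub_pos.2 ha))]

lemma cosh_sq_add (a b : ℝ) :
    Real.cosh a ^ 2 + Real.cosh b ^ 2 = Real.cosh (a + b) * Real.cosh (a - b) + 1 := by
  have ha := Real.exp_ne_zero a; have hb := Real.exp_ne_zero b
  simp only [Real.cosh_eq, Real.exp_neg, Real.exp_add, Real.exp_sub]
  field_simp
  ring

lemma exp_neg_two_log {A : ℝ} (hA : 0 < A) :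
    Real.exp (-(2 * Real.log A)) = 1 / A ^ 2 := by
  rw [Real.exp_neg, two_mul, Real.exp_add, Real.exp_log hA, one_div]
  rw [sq]

lemma kappa_integrand_eq {s₀ σ : ℝ} (hs₀ : 0 < s₀) (hσ : 0 < σ) (z x : ℝ) :
    densLS (fun t => 2 * Real.log ((Real.exp (t / (2 * s₀)) + Real.exp (-(t / (2 * s₀)))) / 2))
        (4 * s₀) σ z x *
      (1 - Real.tanh (Ffun (fun t => 2 * Real.log ((Real.exp (t / (2 * s₀)) +
          Real.exp (-(t / (2 * s₀)))) / 2)) σ z x / 2))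
    = 1 / (2 * (σ * s₀) * (1 + Real.cosh (x / (σ * s₀)) * Real.cosh (z / (σ * s₀)))) := by
  set a := (x + z) / (2 * (σ * s₀)) with ha
  set b := (x - z) / (2 * (σ * s₀)) with hb
  have hA : 0 < Real.cosh a := Real.cosh_pos a
  have hB : 0 < Real.cosh b := Real.cosh_pos b
  have habs1 : |x - z| / σ / (2 * s₀) = |b| := by
    rw [hb, abs_div, abs_of_pos (by positivity : (0:ℝ) < 2 * (σ * s₀)), div_div]
    ring_nf
  have habs2 : |x + z| / σ / (2 * s₀) = |a| := by
    rw [ha, abs_div, abs_of_pos (by positivity : (0:ℝ) < 2 * (σ * s₀)), div_div]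
    ring_nf
  have habs0 : |(x - z) / σ| / (2 * s₀) = |b| := by
    rw [abs_div, abs_of_pos hσ]; exact habs1
  simp only [densLS, dens, Ffun]
  rw [habs0, habs1, habs2, ← Real.cosh_eq, ← Real.cosh_eq, Real.cosh_abs, Real.cosh_abs]
  rw [exp_neg_two_log hB]
  have hy : (2 * Real.log (Real.cosh a) - 2 * Real.log (Real.cosh b)) / 2
      = Real.log (Real.cosh a) - Real.log (Real.cosh b) := by ring
  have hab1 : a + b = x / (σ * s₀) := by rw [ha, hb]; field_simp; ring
  have hab2 : a - b = z / (σ * s₀) := by rw [ha, hb]; field_simp; ring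
  have hkey : Real.cosh (x / (σ * s₀)) * Real.cosh (z / (σ * s₀))
      = Real.cosh a ^ 2 + Real.cosh b ^ 2 - 1 := by
    have h := cosh_sq_add a b
    rw [hab1, hab2] at h
    linarith
  rw [hy, hkey]
  generalize hGA : Real.cosh a = A at hA ⊢
  generalize hGB : Real.cosh b = B at hB ⊢
  rw [Real.tanh_eq_sinh_div_cosh, Real.sinh_eq, Real.cosh_eq, Real.exp_sub, Real.exp_log hA,
    Real.exp_log hB, neg_sub, Real.exp_sub, Real.exp_log hB, Real.exp_log hA]
  have h1 : A / B + B / A ≠ 0 := by positivity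
  have h2 : A ^ 2 + B ^ 2 ≠ 0 := by positivity
  field_simp
  rw [show (1:ℝ) + (A ^ 2 + B ^ 2 - 1) = A ^ 2 + B ^ 2 by ring, mul_div_assoc, div_self h2]
  ring

/-- Logistic contraction factor: with `f(x) = exp(x)/(1+exp(x))²` the
standard logistic density, the stated integral bound holds and is `< 1` for every `z > 0`;
consequently for the unit-variance logistic member of `F` (scale `σ₀ = √3/π`, i.e.
`g(t) = 2 log((e^{t/(2σ₀)} + e^{-t/(2σ₀)})/2)`, `C = 4σ₀`), the LS-EM contraction factor
satisfies the stated bound with `z = min(β, β*)`, for all `β, β* > 0`. -/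
theorem stmt4 (σ : ℝ) (hσ : 0 < σ) :
    (∀ z : ℝ, 0 < z →
      (2 * ∫ x : ℝ,
          (Real.exp (x - z) / (1 + Real.exp (x - z)) ^ 2) *
            (Real.exp (x + z) / (1 + Real.exp (x + z)) ^ 2) /
          (Real.exp (x - z) / (1 + Real.exp (x - z)) ^ 2 +
            Real.exp (x + z) / (1 + Real.exp (x + z)) ^ 2) ≤
        4 / (Real.exp z + Real.exp (-z) + 2)) ∧
      4 / (Real.exp z + Real.exp (-z) + 2) < 1) ∧
    (∀ β βs : ℝ, 0 < β → 0 < βs →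
      kappa (fun t => 2 * Real.log ((Real.exp (t / (2 * (Real.sqrt 3 / π))) +
            Real.exp (-(t / (2 * (Real.sqrt 3 / π))))) / 2))
          (4 * (Real.sqrt 3 / π)) σ βs β ≤
        4 * Real.exp (-(π * min β βs) / (σ * Real.sqrt 3)) /
          (1 + Real.exp (-(2 * π * min β βs) / (σ * Real.sqrt 3)) +
            2 * Real.exp (-(π * min β βs) / (σ * Real.sqrt 3)))) := by
  constructor
  · intro z hz
    exact ⟨part1a z, part1b z hz⟩
  · intro β βs hβ hβs
    have hπ := Real.pi_pos
    have hs₀ : (0:ℝ) < Real.sqrt 3 / π := by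
      have h3 : (0:ℝ) < Real.sqrt 3 := Real.sqrt_pos.2 (by norm_num)
      positivity
    have h3 : (0:ℝ) < Real.sqrt 3 := Real.sqrt_pos.2 (by norm_num)
    set s₀ := Real.sqrt 3 / π with hs₀def
    set z := min β βs with hzdef
    have hzpos : 0 < z := lt_min hβ hβs
    have hminabs : min |β| |βs| = z := by rw [abs_of_pos hβ, abs_of_pos hβs]
    have hc : 0 < σ * s₀ := by positivity
    have hφeq : (fun x : ℝ =>
        densLS (fun t => 2 * Real.log ((Real.exp (t / (2 * s₀)) +
            Real.exp (-(t / (2 * s₀)))) / 2)) (4 * s₀) σ (min |β| |βs|) x *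
          (1 - Real.tanh (Ffun (fun t => 2 * Real.log ((Real.exp (t / (2 * s₀)) +
            Real.exp (-(t / (2 * s₀)))) / 2)) σ (min |β| |βs|) x / 2)))
        = fun x : ℝ => 1 / (2 * (σ * s₀) *
            (1 + Real.cosh (x / (σ * s₀)) * Real.cosh (z / (σ * s₀)))) := by
      funext x
      rw [hminabs]
      exact kappa_integrand_eq hs₀ hσ z x
    have hw : z / (σ * s₀) = π * z / (σ * Real.sqrt 3) := by
      rw [hs₀def]
      field_simp
    have e1 : Real.exp (-(π * z) / (σ * Real.sqrt 3))
        = Real.exp (-(π * z / (σ * Real.sqrt 3))) := by rw [neg_div]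
    have e2 : Real.exp (-(2 * π * z) / (σ * Real.sqrt 3))
        = Real.exp (-(π * z / (σ * Real.sqrt 3))) ^ 2 := by
      rw [sq, ← Real.exp_add]; congr 1; ring
    have hE : 0 < Real.exp (π * z / (σ * Real.sqrt 3)) := Real.exp_pos _
    have hfin : 2 / (1 + Real.cosh (z / (σ * s₀))) =
        4 * Real.exp (-(π * z) / (σ * Real.sqrt 3)) /
          (1 + Real.exp (-(2 * π * z) / (σ * Real.sqrt 3)) +
            2 * Real.exp (-(π * z) / (σ * Real.sqrt 3))) := by
      rw [e1, e2, hw, Real.cosh_eq, Real.exp_neg]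
      rw [div_eq_div_iff (by positivity) (by positivity)]
      field_simp
      ring
    calc kappa (fun t => 2 * Real.log ((Real.exp (t / (2 * s₀)) +
            Real.exp (-(t / (2 * s₀)))) / 2)) (4 * s₀) σ βs β
        = ∫ x : ℝ, 1 / (2 * (σ * s₀) *
            (1 + Real.cosh (x / (σ * s₀)) * Real.cosh (z / (σ * s₀)))) := by
          unfold kappa
          rw [hφeq]
      _ ≤ 2 / (1 + Real.cosh (z / (σ * s₀))) := core_bound _ hc
      _ = _ := hfin
end
end

section
/- There exists an absolute constant C₀ > 0 with the following property. Let f ∈ F be a one-dimensional density, β* ≠ 0, σ > 0, and suppose the signal-to-noise ratio η = |β*|/σ satisfies η ≥ C₀. Consider the mis-specified (Gaussian-fit) LS-EM iteration β^{t+1} = E_{X ~ f_{β*,σ}}[X·tanh(β^t·X/σ²)]. Then from any nonzero initial point β⁰, the iterates converge to a limit β̄ with sign(β̄) = sign(β⁰) and |β̄ − sign(β⁰·β*)·β*| ≤ 10·σ. -/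
open MeasureTheory Real Filter

noncomputable section

namespace Stmt18Aux

lemma tanh_formula (x : ℝ) :
    Real.tanh x = ((Real.exp x)^2 - 1) / ((Real.exp x)^2 + 1) := by
  have h : (0:ℝ) < Real.exp x := Real.exp_pos x
  rw [Real.tanh_eq_sinh_div_cosh, Real.sinh_eq, Real.cosh_eq, Real.exp_neg]
  rw [div_eq_div_iff (by positivity) (by positivity)]
  field_simp

lemma tanh_mono : Monotone Real.tanh := by
  intro a b hab
  rw [tanh_formula, tanh_formula]
  have ha : (0:ℝ) < Real.exp a := Real.exp_pos a
  have hb : (0:ℝ) < Real.exp b := Real.exp_pos b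
  have h : Real.exp a ≤ Real.exp b := Real.exp_le_exp.2 hab
  rw [div_le_div_iff₀ (by positivity) (by positivity)]
  nlinarith

lemma tanh_le_one (x : ℝ) : Real.tanh x ≤ 1 := by
  rw [tanh_formula]
  have h : (0:ℝ) < Real.exp x := Real.exp_pos x
  rw [div_le_one (by positivity)]
  linarith

lemma neg_one_le_tanh (x : ℝ) : -1 ≤ Real.tanh x := by
  rw [tanh_formula]
  have h : (0:ℝ) < Real.exp x := Real.exp_pos x
  rw [le_div_iff₀ (by positivity)]
  nlinarith

lemma abs_tanh_le_one (x : ℝ) : |Real.tanh x| ≤ 1 :=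
  abs_le.2 ⟨neg_one_le_tanh x, tanh_le_one x⟩

lemma tanh_nonneg {x : ℝ} (hx : 0 ≤ x) : 0 ≤ Real.tanh x := by
  have := tanh_mono hx
  simpa [Real.tanh_zero] using this

lemma tanh_ge_one_sub (x : ℝ) : 1 - 2 * Real.exp (-(2*x)) ≤ Real.tanh x := by
  rw [tanh_formula]
  have h : (0:ℝ) < Real.exp x := Real.exp_pos x
  have h3 : (0:ℝ) < (Real.exp x)^2 := by positivity
  have h2 : Real.exp (-(2*x)) = 1 / (Real.exp x)^2 := by
    rw [Real.exp_neg, show (2:ℝ)*x = x + x by ring, Real.exp_add, sq]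
    exact (one_div _).symm
  rw [h2, le_div_iff₀ (by positivity)]
  have hs : (Real.exp x)^2 * (1 / (Real.exp x)^2) = 1 := by
    field_simp
  nlinarith [one_div_pos.2 h3]

lemma tanh_half_lb {u : ℝ} (h0 : 0 ≤ u) (h1 : u ≤ 1) : u / 2 ≤ Real.tanh u := by
  rw [tanh_formula]
  have h : u + 1 ≤ Real.exp u := Real.add_one_le_exp u
  have h' : (0:ℝ) < Real.exp u := Real.exp_pos u
  have ht2 : (1+u)^2 ≤ (Real.exp u)^2 := by nlinarith
  rw [le_div_iff₀ (by positivity)]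
  nlinarith [mul_nonneg h0 (sub_nonneg.2 h1), sq_nonneg u,
    mul_nonneg (sub_nonneg.2 h1) (sub_nonneg.2 ht2)]

lemma tanh_one_lb {u : ℝ} (h : 1 ≤ u) : 1/2 ≤ Real.tanh u := by
  rw [tanh_formula]
  have h2 : (2:ℝ) ≤ Real.exp u := by
    calc (2:ℝ) ≤ u + 1 := by linarith
    _ ≤ Real.exp u := Real.add_one_le_exp u
  rw [le_div_iff₀ (by positivity)]
  nlinarith

lemma continuous_tanh : Continuous Real.tanh := by
  have : Real.tanh = fun x => Real.sinh x / Real.cosh x :=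
    funext fun x => Real.tanh_eq_sinh_div_cosh x
  rw [this]
  exact Real.continuous_sinh.div Real.continuous_cosh fun x => (Real.cosh_pos x).ne'


variable {g : ℝ → ℝ} {C σ B : ℝ}

lemma dens_pos (hF : InClassF g C) (x : ℝ) : 0 < dens g C x := by
  have := hF.C_pos
  unfold dens
  positivity

lemma dens_even (x : ℝ) : dens g C (-x) = dens g C x := by
  simp [dens, abs_neg]

lemma densLS_pos (hF : InClassF g C) (hσ : 0 < σ) (x : ℝ) : 0 < densLS g C σ B x := by
  unfold densLS
  exact mul_pos (by positivity) (dens_pos hF _)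

lemma densLS_neg_param (x : ℝ) : densLS g C σ (-B) x = densLS g C σ B (-x) := by
  unfold densLS
  rw [show (-x - B)/σ = -((x - -B)/σ) by ring, dens_even]

lemma int_f (hF : InClassF g C) : Integrable (dens g C) := by
  by_contra h
  have := hF.integral_one
  rw [integral_undef h] at this
  norm_num at this

lemma int_x2f (hF : InClassF g C) : Integrable (fun x => x ^ 2 * dens g C x) := by
  by_contra h
  have := hF.variance_one
  rw [integral_undef h] at this
  norm_num at this

lemma int_xf (hF : InClassF g C) : Integrable (fun x => x * dens g C x) := by
  refine Integrable.mono' ((int_f hF).add (int_x2f hF)) ?_ ?_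
  · exact aestronglyMeasurable_id.mul (int_f hF).aestronglyMeasurable
  · filter_upwards with x
    have hd := dens_pos hF x
    have hn : ‖x * dens g C x‖ = |x| * dens g C x := by
      rw [norm_mul, Real.norm_eq_abs, Real.norm_eq_abs, abs_of_pos hd]
    rw [hn]
    have h1 : |x| * dens g C x ≤ (1 + x^2) * dens g C x := by
      have : |x| ≤ 1 + x^2 := by nlinarith [sq_abs x, abs_nonneg x, sq_nonneg (|x| - 1)]
      exact mul_le_mul_of_nonneg_right this hd.le
    calc |x| * dens g C x ≤ (1 + x^2) * dens g C x := h1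
    _ = dens g C x + x^2 * dens g C x := by ring

lemma int_xf_zero (hF : InClassF g C) : ∫ x : ℝ, x * dens g C x = 0 := by
  have h1 : ∫ x : ℝ, (fun y => y * dens g C y) (-x) = ∫ x : ℝ, x * dens g C x :=
    integral_neg_eq_self (fun y => y * dens g C y) volume
  have h2 : ∀ x : ℝ, (fun y => y * dens g C y) (-x) = -(x * dens g C x) := by
    intro x
    simp [dens_even]
  rw [funext h2] at h1
  rw [integral_neg] at h1
  linarith

lemma cov_integral (hσ : 0 < σ) (G : ℝ → ℝ) :
    ∫ x : ℝ, G ((x - B)/σ) = σ * ∫ y : ℝ, G y := by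
  calc ∫ x : ℝ, G ((x - B)/σ) = ∫ x : ℝ, (fun u => G (u/σ)) (x - B) := rfl
  _ = ∫ x : ℝ, G (x/σ) := integral_sub_right_eq_self (fun u => G (u/σ)) B
  _ = |σ| • ∫ y : ℝ, G y := Measure.integral_comp_div G σ
  _ = σ * ∫ y : ℝ, G y := by rw [abs_of_pos hσ, smul_eq_mul]

lemma cov_integrable (hσ : 0 < σ) {G : ℝ → ℝ} (hG : Integrable G) :
    Integrable (fun x => G ((x - B)/σ)) := by
  have h1 : Integrable (fun u : ℝ => G (u/σ)) := (integrable_comp_div_iff G hσ.ne').2 hG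
  exact h1.comp_sub_right B

end Stmt18Aux

namespace Stmt18Aux2
open Stmt18Aux Filter

variable {g : ℝ → ℝ} {C σ B : ℝ}

lemma moment_eq (hσ : 0 < σ) (φ : ℝ → ℝ) :
    ∫ x : ℝ, densLS g C σ B x * φ x = ∫ y : ℝ, dens g C y * φ (σ * y + B) := by
  have hfun : (fun x => densLS g C σ B x * φ x)
      = fun x => (fun y => 1 / σ * (dens g C y * φ (σ * y + B))) ((x - B)/σ) := by
    funext x
    have hx : σ * ((x - B)/σ) + B = x := by field_simp; ring
    simp only [hx, densLS]
    ring
  have h := cov_integral (B := B) hσ (fun y => 1 / σ * (dens g C y * φ (σ * y + B)))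
  beta_reduce at h
  rw [hfun, h, integral_const_mul, ← mul_assoc]
  field_simp

lemma moment_int (hσ : 0 < σ) {φ : ℝ → ℝ}
    (h : Integrable (fun y => dens g C y * φ (σ * y + B))) :
    Integrable (fun x => densLS g C σ B x * φ x) := by
  have h2 : Integrable (fun y => 1 / σ * (dens g C y * φ (σ * y + B))) := h.const_mul _
  have h3 := cov_integrable (B := B) hσ h2
  refine h3.congr (Eventually.of_forall fun x => ?_)
  have hx : σ * ((x - B)/σ) + B = x := by field_simp; ring
  simp only [hx, densLS]
  ring

lemma P0 (hF : InClassF g C) (hσ : 0 < σ) : Integrable (densLS g C σ B) := by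
  have h := moment_int (B := B) hσ (φ := fun _ => (1:ℝ)) (by simpa using int_f hF)
  simpa using h

lemma I0 (hF : InClassF g C) (hσ : 0 < σ) : ∫ x : ℝ, densLS g C σ B x = 1 := by
  have h := moment_eq (g := g) (C := C) (B := B) hσ (fun _ => (1:ℝ))
  simp only [mul_one] at h
  rw [h, hF.integral_one]

lemma inner1 (hF : InClassF g C) :
    Integrable (fun y => dens g C y * (σ * y + B)) := by
  have h1 : Integrable (fun y : ℝ => σ * (y * dens g C y)) := (int_xf hF).const_mul σ
  have h2 : Integrable (fun y : ℝ => B * dens g C y) := (int_f hF).const_mul B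
  have h12 : Integrable (fun y : ℝ => σ * (y * dens g C y) + B * dens g C y) := h1.add h2
  exact h12.congr (Eventually.of_forall fun x => by ring)

lemma P1 (hF : InClassF g C) (hσ : 0 < σ) :
    Integrable (fun x => densLS g C σ B x * x) :=
  moment_int hσ (φ := fun x => x) (inner1 hF)

lemma I1 (hF : InClassF g C) (hσ : 0 < σ) : ∫ x : ℝ, densLS g C σ B x * x = B := by
  rw [moment_eq hσ (fun x => x)]
  have h1 : Integrable (fun y : ℝ => σ * (y * dens g C y)) := (int_xf hF).const_mul σ
  have h2 : Integrable (fun y : ℝ => B * dens g C y) := (int_f hF).const_mul B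
  have hsplit : (fun y => dens g C y * (σ * y + B))
      = fun y => σ * (y * dens g C y) + B * dens g C y := by
    funext y; ring
  rw [hsplit, integral_add h1 h2, integral_const_mul, integral_const_mul,
    int_xf_zero hF, hF.integral_one]
  ring

lemma P2 (hF : InClassF g C) (hσ : 0 < σ) :
    Integrable (fun x => densLS g C σ B x * x^2) := by
  refine moment_int hσ (φ := fun x => x^2) ?_
  have h1 : Integrable (fun y : ℝ => σ^2 * (y^2 * dens g C y)) := (int_x2f hF).const_mul _
  have h2 : Integrable (fun y : ℝ => 2*σ*B * (y * dens g C y)) := (int_xf hF).const_mul _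
  have h3 : Integrable (fun y : ℝ => B^2 * dens g C y) := (int_f hF).const_mul _
  have h123 : Integrable (fun y : ℝ =>
      (σ^2 * (y^2 * dens g C y) + 2*σ*B * (y * dens g C y)) + B^2 * dens g C y) :=
    (h1.add h2).add h3
  exact h123.congr (Eventually.of_forall fun x => by ring)

lemma I2 (hF : InClassF g C) (hσ : 0 < σ) :
    ∫ x : ℝ, densLS g C σ B x * x^2 = σ^2 + B^2 := by
  rw [moment_eq hσ (fun x => x^2)]
  have h1 : Integrable (fun y : ℝ => σ^2 * (y^2 * dens g C y)) := (int_x2f hF).const_mul _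
  have h2 : Integrable (fun y : ℝ => 2*σ*B * (y * dens g C y)) := (int_xf hF).const_mul _
  have h3 : Integrable (fun y : ℝ => B^2 * dens g C y) := (int_f hF).const_mul _
  have h12 : Integrable (fun y : ℝ =>
      σ^2 * (y^2 * dens g C y) + 2*σ*B * (y * dens g C y)) := h1.add h2
  have hsplit : (fun y => dens g C y * (σ * y + B)^2)
      = fun y => (σ^2 * (y^2 * dens g C y) + 2*σ*B * (y * dens g C y)) + B^2 * dens g C y := by
    funext y; ring
  rw [hsplit, integral_add h12 h3, integral_add h1 h2,
    integral_const_mul, integral_const_mul, integral_const_mul,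
    int_xf_zero hF, hF.integral_one, hF.variance_one]
  ring

lemma P3 (hF : InClassF g C) (hσ : 0 < σ) :
    Integrable (fun x => densLS g C σ B x * ((x - B)/σ)^2) := by
  refine moment_int hσ (φ := fun x => ((x - B)/σ)^2) ?_
  have h : (fun y => dens g C y * ((σ * y + B - B)/σ)^2) = fun y => y^2 * dens g C y := by
    funext y
    have hy : (σ * y + B - B)/σ = y := by field_simp; ring
    rw [hy]; ring
  rw [h]
  exact int_x2f hF

lemma I3 (hF : InClassF g C) (hσ : 0 < σ) :
    ∫ x : ℝ, densLS g C σ B x * ((x - B)/σ)^2 = 1 := by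
  rw [moment_eq hσ (fun x => ((x - B)/σ)^2)]
  have h : (fun y => dens g C y * ((σ * y + B - B)/σ)^2) = fun y => y^2 * dens g C y := by
    funext y
    have hy : (σ * y + B - B)/σ = y := by field_simp; ring
    rw [hy]; ring
  rw [h, hF.variance_one]

end Stmt18Aux2

namespace Stmt18Aux3
open Stmt18Aux Stmt18Aux2 Filter MeasureTheory

variable {g : ℝ → ℝ} {C σ B : ℝ}

lemma tanh_pos {x : ℝ} (hx : 0 < x) : 0 < Real.tanh x := by
  rw [tanh_formula]
  have h1 : (1:ℝ) < Real.exp x := by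
    rw [show (1:ℝ) = Real.exp 0 by simp]
    exact Real.exp_lt_exp.2 hx
  have h2 : (0:ℝ) < Real.exp x := Real.exp_pos x
  apply div_pos <;> nlinarith

lemma ptwise_mono (hσ : 0 < σ) {b1 b2 : ℝ} (h : b1 ≤ b2) (x : ℝ) :
    x * Real.tanh (b1 * x / σ^2) ≤ x * Real.tanh (b2 * x / σ^2) := by
  rcases le_or_gt 0 x with hx | hx
  · apply mul_le_mul_of_nonneg_left _ hx
    apply tanh_mono
    apply div_le_div_of_nonneg_right _ (by positivity)
    exact mul_le_mul_of_nonneg_right h hx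
  · apply mul_le_mul_of_nonpos_left _ hx.le
    apply tanh_mono
    apply div_le_div_of_nonneg_right _ (by positivity)
    exact mul_le_mul_of_nonpos_right h hx.le

lemma ptwise_sign (hσ : 0 < σ) {b : ℝ} (hb : 0 ≤ b) (x : ℝ) :
    0 ≤ x * Real.tanh (b * x / σ^2) := by
  rcases le_or_gt 0 x with hx | hx
  · exact mul_nonneg hx (tanh_nonneg (by positivity))
  · have harg : b * x / σ^2 ≤ 0 := by
      apply div_nonpos_of_nonpos_of_nonneg _ (by positivity)
      exact mul_nonpos_of_nonneg_of_nonpos hb hx.le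
    have h2 : Real.tanh (b * x / σ^2) ≤ 0 := by
      have := tanh_mono harg
      simpa [Real.tanh_zero] using this
    nlinarith

lemma ptwise_strictpos (hσ : 0 < σ) {b x : ℝ} (hb : 0 < b) (hx : 0 < x) :
    0 < x * Real.tanh (b * x / σ^2) :=
  mul_pos hx (tanh_pos (by positivity))

lemma ptwise_abs (hσ : 0 < σ) (b x : ℝ) :
    x * Real.tanh (b * x / σ^2) = |x| * Real.tanh (b * |x| / σ^2) := by
  rcases le_or_gt 0 x with hx | hx
  · rw [abs_of_nonneg hx]
  · rw [abs_of_neg hx, show b * -x / σ^2 = -(b * x / σ^2) by ring, Real.tanh_neg]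
    ring

lemma aesm_main (hF : InClassF g C) (hσ : 0 < σ) (b : ℝ) :
    AEStronglyMeasurable (fun x => densLS g C σ B x * (x * Real.tanh (b * x / σ^2)))
      (volume : Measure ℝ) := by
  refine ((P0 (B := B) hF hσ).aestronglyMeasurable).mul ?_
  refine Continuous.aestronglyMeasurable ?_
  exact continuous_id.mul (continuous_tanh.comp
    ((continuous_const.mul continuous_id).div_const _))

lemma norm_bound (hF : InClassF g C) (hσ : 0 < σ) (b x : ℝ) :
    ‖densLS g C σ B x * (x * Real.tanh (b * x / σ^2))‖
      ≤ densLS g C σ B x + densLS g C σ B x * x^2 := by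
  have hd := densLS_pos (B := B) hF hσ x
  have h1 : |x * Real.tanh (b * x / σ^2)| ≤ |x| := by
    rw [abs_mul]
    calc |x| * |Real.tanh (b * x / σ^2)| ≤ |x| * 1 :=
      mul_le_mul_of_nonneg_left (abs_tanh_le_one _) (abs_nonneg x)
    _ = |x| := mul_one _
  rw [norm_mul, Real.norm_eq_abs, Real.norm_eq_abs, abs_of_pos hd]
  calc densLS g C σ B x * |x * Real.tanh (b * x / σ^2)|
      ≤ densLS g C σ B x * |x| := mul_le_mul_of_nonneg_left h1 hd.le
  _ ≤ densLS g C σ B x * (1 + x^2) := by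
      apply mul_le_mul_of_nonneg_left _ hd.le
      nlinarith [sq_abs x, abs_nonneg x, sq_nonneg (|x| - 1)]
  _ = densLS g C σ B x + densLS g C σ B x * x^2 := by ring

lemma int_bound (hF : InClassF g C) (hσ : 0 < σ) :
    Integrable (fun x => densLS g C σ B x + densLS g C σ B x * x^2) :=
  (P0 hF hσ).add (P2 hF hσ)

lemma int_main (hF : InClassF g C) (hσ : 0 < σ) (b : ℝ) :
    Integrable (fun x => densLS g C σ B x * (x * Real.tanh (b * x / σ^2))) := by
  refine (int_bound (B := B) hF hσ).mono' (aesm_main hF hσ b) ?_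
  exact Eventually.of_forall (norm_bound hF hσ b)

lemma h_mono (hF : InClassF g C) (hσ : 0 < σ) {b1 b2 : ℝ} (h : b1 ≤ b2) :
    ∫ x : ℝ, densLS g C σ B x * (x * Real.tanh (b1 * x / σ^2))
      ≤ ∫ x : ℝ, densLS g C σ B x * (x * Real.tanh (b2 * x / σ^2)) := by
  refine integral_mono (int_main hF hσ b1) (int_main hF hσ b2) fun x => ?_
  exact mul_le_mul_of_nonneg_left (ptwise_mono hσ h x) (densLS_pos hF hσ x).le

lemma h_pos (hF : InClassF g C) (hσ : 0 < σ) {b : ℝ} (hb : 0 < b) :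
    0 < ∫ x : ℝ, densLS g C σ B x * (x * Real.tanh (b * x / σ^2)) := by
  rw [integral_pos_iff_support_of_nonneg]
  · have hsub : Set.Ioi (0:ℝ) ⊆
        Function.support (fun x => densLS g C σ B x * (x * Real.tanh (b * x / σ^2))) := by
      intro x hx
      have hx0 : (0:ℝ) < x := hx
      exact (mul_pos (densLS_pos hF hσ x) (ptwise_strictpos hσ hb hx0)).ne'
    have h2 := measure_mono (μ := (volume : Measure ℝ)) hsub
    rw [Real.volume_Ioi] at h2
    exact lt_of_lt_of_le (by norm_num) h2
  · intro x
    exact mul_nonneg (densLS_pos hF hσ x).le (ptwise_sign hσ hb.le x)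
  · exact int_main hF hσ b

lemma h_le (hF : InClassF g C) (hσ : 0 < σ) (hB0 : 0 < B) (hσB : σ ≤ B) (b : ℝ) :
    ∫ x : ℝ, densLS g C σ B x * (x * Real.tanh (b * x / σ^2)) ≤ B + σ := by
  have hrhs : Integrable (fun x => (1/(2*B)) * (densLS g C σ B x * x^2)
      + (B/2) * densLS g C σ B x) :=
    ((P2 hF hσ).const_mul _).add ((P0 hF hσ).const_mul _)
  have hle : ∫ x : ℝ, densLS g C σ B x * (x * Real.tanh (b * x / σ^2))
      ≤ ∫ x : ℝ, ((1/(2*B)) * (densLS g C σ B x * x^2) + (B/2) * densLS g C σ B x) := by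
    refine integral_mono (int_main hF hσ b) hrhs fun x => ?_
    have hd := densLS_pos (B := B) hF hσ x
    have h1 : x * Real.tanh (b * x / σ^2) ≤ |x| := by
      calc x * Real.tanh (b * x / σ^2) ≤ |x * Real.tanh (b * x / σ^2)| := le_abs_self _
      _ ≤ |x| := by
        rw [abs_mul]
        calc |x| * |Real.tanh (b * x / σ^2)| ≤ |x| * 1 :=
          mul_le_mul_of_nonneg_left (abs_tanh_le_one _) (abs_nonneg x)
        _ = |x| := mul_one _
    have h2 : |x| ≤ x^2/(2*B) + B/2 := by
      rw [div_add_div _ _ (by positivity : (2:ℝ)*B ≠ 0) (by norm_num : (2:ℝ) ≠ 0)]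
      rw [le_div_iff₀ (by positivity)]
      nlinarith [sq_abs x, sq_nonneg (|x| - B)]
    calc densLS g C σ B x * (x * Real.tanh (b * x / σ^2))
        ≤ densLS g C σ B x * (x^2/(2*B) + B/2) := by
          refine mul_le_mul_of_nonneg_left (h1.trans h2) hd.le
    _ = (1/(2*B)) * (densLS g C σ B x * x^2) + (B/2) * densLS g C σ B x := by
          field_simp
  rw [integral_add ((P2 hF hσ).const_mul _) ((P0 hF hσ).const_mul _),
    integral_const_mul, integral_const_mul, I2 hF hσ, I0 hF hσ] at hle
  have hfin : 1/(2*B) * (σ^2 + B^2) + B/2 * 1 ≤ B + σ := by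
    have e1 : σ^2 + B^2 ≤ σ*B + B^2 := by nlinarith
    have e2 : 1/(2*B) * (σ^2 + B^2) ≤ 1/(2*B) * (σ*B + B^2) :=
      mul_le_mul_of_nonneg_left e1 (by positivity)
    have e3 : 1/(2*B) * (σ*B + B^2) = σ/2 + B/2 := by
      field_simp
    nlinarith
  linarith

lemma h_cont (hF : InClassF g C) (hσ : 0 < σ) :
    Continuous (fun b => ∫ x : ℝ, densLS g C σ B x * (x * Real.tanh (b * x / σ^2))) := by
  refine continuous_of_dominated (fun b => aesm_main hF hσ b)
    (fun b => Eventually.of_forall (norm_bound hF hσ b)) (int_bound hF hσ) ?_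
  refine Eventually.of_forall fun x => ?_
  refine continuous_const.mul (continuous_const.mul ?_)
  exact continuous_tanh.comp ((continuous_id.mul continuous_const).div_const _)

end Stmt18Aux3

namespace Stmt18Aux4
open Stmt18Aux Stmt18Aux2 Stmt18Aux3 Filter MeasureTheory

variable {g : ℝ → ℝ} {C σ B : ℝ}

lemma texp {c s t : ℝ} (hs : 0 < s) (hc0 : 0 ≤ c) (hc : 1 ≤ c * s) (hst : s ≤ t) :
    t * Real.exp (-(c*t)) ≤ s * Real.exp (-(c*s)) := by
  have h1 : t ≤ s * Real.exp (c*(t-s)) := by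
    have he : c*(t-s) + 1 ≤ Real.exp (c*(t-s)) := Real.add_one_le_exp _
    nlinarith [mul_nonneg hc0 (sub_nonneg.2 hst)]
  calc t * Real.exp (-(c*t)) ≤ (s * Real.exp (c*(t-s))) * Real.exp (-(c*t)) :=
        mul_le_mul_of_nonneg_right h1 (Real.exp_pos _).le
  _ = s * Real.exp (-(c*s)) := by
      rw [mul_assoc, ← Real.exp_add, show c*(t-s) + -(c*t) = -(c*s) by ring]

lemma int_ind (hF : InClassF g C) (hσ : 0 < σ) {T : Set ℝ} (hT : MeasurableSet T) :
    Integrable (fun x => densLS g C σ B x * T.indicator (fun _ => (1:ℝ)) x) := by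
  refine (P0 (B := B) hF hσ).mono' ?_ ?_
  · exact (P0 hF hσ).aestronglyMeasurable.mul
      ((measurable_const.indicator hT).aestronglyMeasurable)
  · refine Eventually.of_forall fun x => ?_
    have hd := densLS_pos (B := B) hF hσ x
    by_cases hx : x ∈ T
    · rw [Set.indicator_of_mem hx, mul_one, Real.norm_eq_abs, abs_of_pos hd]
    · rw [Set.indicator_of_notMem hx, mul_zero, norm_zero]
      exact hd.le

lemma chev (hF : InClassF g C) (hσ : 0 < σ) (hB0 : 0 < B) :
    ∫ x : ℝ, densLS g C σ B x * ({x : ℝ | |x| < B/2}).indicator (fun _ => (1:ℝ)) x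
      ≤ 4*σ^2/B^2 := by
  have hT : MeasurableSet {x : ℝ | |x| < B/2} :=
    (isOpen_lt continuous_abs continuous_const).measurableSet
  have hrhs : Integrable (fun x => (4*σ^2/B^2) * (densLS g C σ B x * ((x-B)/σ)^2)) :=
    (P3 hF hσ).const_mul _
  have hmono : ∫ x : ℝ, densLS g C σ B x * ({x : ℝ | |x| < B/2}).indicator (fun _ => (1:ℝ)) x
      ≤ ∫ x : ℝ, (4*σ^2/B^2) * (densLS g C σ B x * ((x-B)/σ)^2) := by
    refine integral_mono (int_ind hF hσ hT) hrhs fun x => ?_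
    have hd := densLS_pos (B := B) hF hσ x
    by_cases hx : x ∈ {x : ℝ | |x| < B/2}
    · rw [Set.indicator_of_mem hx, mul_one]
      have hx' : |x| < B/2 := hx
      have h1 : B/2 ≤ |x - B| := by
        have h2 : |B| - |x| ≤ |B - x| := abs_sub_abs_le_abs_sub B x
        rw [abs_of_pos hB0, abs_sub_comm] at h2
        linarith
      have h2 : (B/2)^2 ≤ (x - B)^2 := by
        have := pow_le_pow_left₀ (by positivity : (0:ℝ) ≤ B/2) h1 2
        rwa [sq_abs] at this
      have e1 : 4*σ^2/B^2 * (densLS g C σ B x * ((x-B)/σ)^2)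
          = densLS g C σ B x * ((x-B)^2 * (4/B^2)) := by
        field_simp
      rw [e1]
      have h4 : 1 ≤ (x-B)^2 * (4/B^2) := by
        rw [mul_div_assoc', le_div_iff₀ (by positivity)]
        nlinarith
      exact le_mul_of_one_le_right hd.le h4
    · rw [Set.indicator_of_notMem hx, mul_zero]
      positivity
  have hval : ∫ x : ℝ, (4*σ^2/B^2) * (densLS g C σ B x * ((x-B)/σ)^2) = 4*σ^2/B^2 := by
    rw [integral_const_mul, I3 hF hσ, mul_one]
  linarith

lemma indS_lower (hF : InClassF g C) (hσ : 0 < σ) (hBσ : 100*σ ≤ B) :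
    (9:ℝ)/10 ≤ ∫ x : ℝ, densLS g C σ B x *
      ({x : ℝ | B/2 ≤ |x|}).indicator (fun _ => (1:ℝ)) x := by
  have hB0 : 0 < B := lt_of_lt_of_le (by positivity) hBσ
  have hT : MeasurableSet {x : ℝ | |x| < B/2} :=
    (isOpen_lt continuous_abs continuous_const).measurableSet
  have hsplit : (fun x => densLS g C σ B x *
      ({x : ℝ | B/2 ≤ |x|}).indicator (fun _ => (1:ℝ)) x)
      = fun x => densLS g C σ B x
        - densLS g C σ B x * ({x : ℝ | |x| < B/2}).indicator (fun _ => (1:ℝ)) x := by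
    funext x
    by_cases hx : B/2 ≤ |x|
    · rw [Set.indicator_of_mem (show x ∈ {x : ℝ | B/2 ≤ |x|} from hx),
        Set.indicator_of_notMem (show x ∉ {x : ℝ | |x| < B/2} by simpa using hx)]
      ring
    · rw [Set.indicator_of_notMem (show x ∉ {x : ℝ | B/2 ≤ |x|} from hx),
        Set.indicator_of_mem (show x ∈ {x : ℝ | |x| < B/2} from lt_of_not_ge hx)]
      ring
  rw [hsplit, integral_sub (P0 hF hσ) (int_ind hF hσ hT), I0 hF hσ]
  have h1 := chev hF hσ hB0
  have h2 : 4*σ^2/B^2 ≤ 1/10 := by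
    rw [div_le_iff₀ (by positivity)]
    nlinarith
  linarith

lemma keyA (hF : InClassF g C) (hσ : 0 < σ) (hBσ : 100*σ ≤ B)
    {b : ℝ} (hb : 0 < b) (hb8 : b ≤ B/8) :
    b < ∫ x : ℝ, densLS g C σ B x * (x * Real.tanh (b * x / σ^2)) := by
  have hB0 : 0 < B := lt_of_lt_of_le (by positivity) hBσ
  have hSmeas : MeasurableSet {x : ℝ | B/2 ≤ |x|} :=
    (isClosed_le continuous_const continuous_abs).measurableSet
  set u : ℝ := b*B/(2*σ^2) with hu
  have hu0 : 0 < u := by positivity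
  have htu : 0 ≤ Real.tanh u := tanh_nonneg hu0.le
  -- lower bound integrand by (B/2 * tanh u) * (densLS * indicator)
  have hstep : (B/2 * Real.tanh u) * (∫ x : ℝ, densLS g C σ B x *
        ({x : ℝ | B/2 ≤ |x|}).indicator (fun _ => (1:ℝ)) x)
      ≤ ∫ x : ℝ, densLS g C σ B x * (x * Real.tanh (b * x / σ^2)) := by
    rw [← integral_const_mul]
    refine integral_mono ((int_ind hF hσ hSmeas).const_mul _) (int_main hF hσ b) fun x => ?_
    have hd := densLS_pos (B := B) hF hσ x
    by_cases hx : x ∈ {x : ℝ | B/2 ≤ |x|}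
    · have hx' : B/2 ≤ |x| := hx
      rw [Set.indicator_of_mem hx, mul_one]
      have harg : u ≤ b * |x| / σ^2 := by
        rw [hu, div_le_div_iff₀ (by positivity) (by positivity)]
        nlinarith [mul_le_mul_of_nonneg_left hx' hb.le, mul_pos hσ hσ]
      have h1 : B/2 * Real.tanh u ≤ |x| * Real.tanh (b * |x| / σ^2) :=
        mul_le_mul hx' (tanh_mono harg) htu (abs_nonneg x)
      rw [ptwise_abs hσ b x]
      calc B/2 * Real.tanh u * densLS g C σ B x
          = densLS g C σ B x * (B/2 * Real.tanh u) := by ring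
      _ ≤ densLS g C σ B x * (|x| * Real.tanh (b * |x| / σ^2)) :=
          mul_le_mul_of_nonneg_left h1 hd.le
    · rw [Set.indicator_of_notMem hx, mul_zero, mul_zero]
      exact mul_nonneg hd.le (ptwise_sign hσ hb.le x)
  have hPS := indS_lower hF hσ hBσ
  have hchain : (B/2 * Real.tanh u) * (9/10)
      ≤ ∫ x : ℝ, densLS g C σ B x * (x * Real.tanh (b * x / σ^2)) := by
    refine le_trans ?_ hstep
    exact mul_le_mul_of_nonneg_left hPS (by positivity)
  rcases le_or_gt u 1 with hu1 | hu1
  · have ht2 : u/2 ≤ Real.tanh u := tanh_half_lb hu0.le hu1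
    have h3 : (B/2 * (u/2)) * (9/10) ≤ (B/2 * Real.tanh u) * (9/10) := by
      nlinarith [mul_le_mul_of_nonneg_left ht2 hB0.le]
    have e : (B/2 * (u/2)) * (9/10) = (9*B^2/(80*σ^2)) * b := by
      rw [hu]; field_simp; ring
    have hfac : (1:ℝ) < 9*B^2/(80*σ^2) := by
      rw [lt_div_iff₀ (by positivity)]
      nlinarith
    have h5 : b < (B/2 * (u/2)) * (9/10) := by
      rw [e]
      nlinarith [mul_pos (sub_pos.2 hfac) hb]
    linarith
  · have ht2 : (1:ℝ)/2 ≤ Real.tanh u := tanh_one_lb hu1.le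
    have h3 : (B/2 * (1/2)) * (9/10) ≤ (B/2 * Real.tanh u) * (9/10) := by
      nlinarith [mul_le_mul_of_nonneg_left ht2 hB0.le]
    have h5 : b < (B/2 * (1/2)) * (9/10) := by linarith
    linarith

lemma keyB (hF : InClassF g C) (hσ : 0 < σ) (hBσ : 100*σ ≤ B)
    {b : ℝ} (hblow : B/8 ≤ b) (hbup : b ≤ B - 10*σ) :
    b < ∫ x : ℝ, densLS g C σ B x * (x * Real.tanh (b * x / σ^2)) := by
  have hB0 : 0 < B := lt_of_lt_of_le (by positivity) hBσ
  have hb : 0 < b := lt_of_lt_of_le (by positivity) hblow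
  set c : ℝ := 2*b/σ^2 with hc
  have hc0 : 0 < c := by positivity
  -- integrability of the decaying term
  have hcont1 : Continuous (fun x : ℝ => |x| * Real.exp (-(c * |x|))) :=
    continuous_abs.mul (Real.continuous_exp.comp (continuous_const.mul continuous_abs).neg)
  have hint1 : Integrable (fun x => densLS g C σ B x * (|x| * Real.exp (-(c * |x|)))) := by
    refine (int_bound (B := B) hF hσ).mono'
      ((P0 hF hσ).aestronglyMeasurable.mul hcont1.aestronglyMeasurable) ?_
    refine Eventually.of_forall fun x => ?_
    have hd := densLS_pos (B := B) hF hσ x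
    have he1 : Real.exp (-(c * |x|)) ≤ 1 := by
      apply Real.exp_le_one_iff.2
      have : 0 ≤ c * |x| := mul_nonneg hc0.le (abs_nonneg x)
      linarith
    have he0 : 0 < Real.exp (-(c * |x|)) := Real.exp_pos _
    rw [norm_mul, Real.norm_eq_abs, Real.norm_eq_abs, abs_of_pos hd,
      abs_of_nonneg (mul_nonneg (abs_nonneg x) he0.le)]
    have h2 : |x| * Real.exp (-(c * |x|)) ≤ 1 + x^2 := by
      have h3 : |x| * Real.exp (-(c * |x|)) ≤ |x| * 1 :=
        mul_le_mul_of_nonneg_left he1 (abs_nonneg x)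
      nlinarith [sq_abs x, abs_nonneg x, sq_nonneg (|x| - 1)]
    nlinarith
  have hlow : Integrable (fun x =>
      densLS g C σ B x * x - 2 * (densLS g C σ B x * (|x| * Real.exp (-(c * |x|))))) :=
    (P1 hF hσ).sub (hint1.const_mul 2)
  -- step 1: pointwise lower bound by x - 2|x|e^{-c|x|}
  have hstep1 : ∫ x : ℝ, (densLS g C σ B x * x
        - 2 * (densLS g C σ B x * (|x| * Real.exp (-(c * |x|)))))
      ≤ ∫ x : ℝ, densLS g C σ B x * (x * Real.tanh (b * x / σ^2)) := by
    refine integral_mono hlow (int_main hF hσ b) fun x => ?_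
    have hd := densLS_pos (B := B) hF hσ x
    have htanh : 1 - 2 * Real.exp (-(c * |x|)) ≤ Real.tanh (b * |x| / σ^2) := by
      have := tanh_ge_one_sub (b * |x| / σ^2)
      have harg : 2 * (b * |x| / σ^2) = c * |x| := by
        rw [hc]; field_simp
      rw [harg] at this
      exact this
    have h1 : x - 2 * (|x| * Real.exp (-(c * |x|))) ≤ x * Real.tanh (b * x / σ^2) := by
      rw [ptwise_abs hσ b x]
      have h2 : |x| * (1 - 2 * Real.exp (-(c * |x|))) ≤ |x| * Real.tanh (b * |x| / σ^2) :=
        mul_le_mul_of_nonneg_left htanh (abs_nonneg x)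
      have h3 : x ≤ |x| := le_abs_self x
      nlinarith [Real.exp_pos (-(c * |x|))]
    calc densLS g C σ B x * x - 2 * (densLS g C σ B x * (|x| * Real.exp (-(c * |x|))))
        = densLS g C σ B x * (x - 2 * (|x| * Real.exp (-(c * |x|)))) := by ring
    _ ≤ densLS g C σ B x * (x * Real.tanh (b * x / σ^2)) :=
        mul_le_mul_of_nonneg_left h1 hd.le
  -- step 2: compute the lower integral
  have hval : ∫ x : ℝ, (densLS g C σ B x * x
        - 2 * (densLS g C σ B x * (|x| * Real.exp (-(c * |x|)))))
      = B - 2 * ∫ x : ℝ, densLS g C σ B x * (|x| * Real.exp (-(c * |x|))) := by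
    rw [integral_sub (P1 hF hσ) (hint1.const_mul 2), I1 hF hσ, integral_const_mul]
  -- step 3: bound E := ∫ densLS * |x| e^{-c|x|}
  have hrhs : Integrable (fun x => (B/2 * Real.exp (-(c*B/2))) * densLS g C σ B x
      + (2*σ^2/B) * (densLS g C σ B x * ((x-B)/σ)^2)) :=
    ((P0 hF hσ).const_mul _).add ((P3 hF hσ).const_mul _)
  have hE : ∫ x : ℝ, densLS g C σ B x * (|x| * Real.exp (-(c * |x|)))
      ≤ B/2 * Real.exp (-(c*B/2)) + 2*σ^2/B := by
    have hmono : ∫ x : ℝ, densLS g C σ B x * (|x| * Real.exp (-(c * |x|)))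
        ≤ ∫ x : ℝ, ((B/2 * Real.exp (-(c*B/2))) * densLS g C σ B x
          + (2*σ^2/B) * (densLS g C σ B x * ((x-B)/σ)^2)) := by
      refine integral_mono hint1 hrhs fun x => ?_
      have hd := densLS_pos (B := B) hF hσ x
      rcases le_or_gt (B/2) |x| with hx | hx
      · have h1 : |x| * Real.exp (-(c * |x|)) ≤ B/2 * Real.exp (-(c * (B/2))) := by
          refine texp (by positivity) hc0.le ?_ hx
          have e1 : c * (B/2) = b*B/σ^2 := by rw [hc]; field_simp
          rw [e1, le_div_iff₀ (by positivity)]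
          nlinarith [mul_le_mul_of_nonneg_right hblow hB0.le,
            mul_nonneg hσ.le (sub_nonneg.2 hBσ), sq_nonneg (B - 100*σ)]
        have h2 : densLS g C σ B x * (|x| * Real.exp (-(c * |x|)))
            ≤ (B/2 * Real.exp (-(c*B/2))) * densLS g C σ B x := by
          have e2 : c * (B/2) = c*B/2 := by ring
          rw [← e2]
          calc densLS g C σ B x * (|x| * Real.exp (-(c * |x|)))
              ≤ densLS g C σ B x * (B/2 * Real.exp (-(c * (B/2)))) :=
                mul_le_mul_of_nonneg_left h1 hd.le
          _ = B/2 * Real.exp (-(c * (B/2))) * densLS g C σ B x := by ring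
        refine h2.trans ?_
        have : 0 ≤ (2*σ^2/B) * (densLS g C σ B x * ((x-B)/σ)^2) := by positivity
        linarith
      · have h1 : |x| * Real.exp (-(c * |x|)) ≤ B/2 := by
          have he1 : Real.exp (-(c * |x|)) ≤ 1 := by
            apply Real.exp_le_one_iff.2
            have : 0 ≤ c * |x| := mul_nonneg hc0.le (abs_nonneg x)
            linarith
          calc |x| * Real.exp (-(c * |x|)) ≤ |x| * 1 :=
            mul_le_mul_of_nonneg_left he1 (abs_nonneg x)
          _ = |x| := mul_one _
          _ ≤ B/2 := hx.le
        have hxB : B/2 ≤ |x - B| := by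
          have h2 : |B| - |x| ≤ |B - x| := abs_sub_abs_le_abs_sub B x
          rw [abs_of_pos hB0, abs_sub_comm] at h2
          linarith
        have hsq : (B/2)^2 ≤ (x - B)^2 := by
          have := pow_le_pow_left₀ (by positivity : (0:ℝ) ≤ B/2) hxB 2
          rwa [sq_abs] at this
        have h3 : densLS g C σ B x * (B/2) ≤ (2*σ^2/B) * (densLS g C σ B x * ((x-B)/σ)^2) := by
          have e1 : (2*σ^2/B) * (densLS g C σ B x * ((x-B)/σ)^2)
              = densLS g C σ B x * ((x-B)^2 * (2/B)) := by
            field_simp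
          rw [e1]
          refine mul_le_mul_of_nonneg_left ?_ hd.le
          rw [mul_div_assoc', le_div_iff₀ (by positivity)]
          nlinarith
        have h4 : densLS g C σ B x * (|x| * Real.exp (-(c * |x|)))
            ≤ densLS g C σ B x * (B/2) := mul_le_mul_of_nonneg_left h1 hd.le
        have h5 : 0 ≤ (B/2 * Real.exp (-(c*B/2))) * densLS g C σ B x := by positivity
        linarith
    have hvalr : ∫ x : ℝ, ((B/2 * Real.exp (-(c*B/2))) * densLS g C σ B x
        + (2*σ^2/B) * (densLS g C σ B x * ((x-B)/σ)^2))
        = B/2 * Real.exp (-(c*B/2)) + 2*σ^2/B := by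
      rw [integral_add ((P0 hF hσ).const_mul _) ((P3 hF hσ).const_mul _),
        integral_const_mul, integral_const_mul, I0 hF hσ, I3 hF hσ]
      ring
    linarith
  -- step 4: B/2 * exp(-(c*B/2)) ≤ σ/2
  have hexp : B/2 * Real.exp (-(c*B/2)) ≤ σ/2 := by
    set w : ℝ := c*B/2 with hw
    have hw1 : w * σ^2 = b * B := by rw [hw, hc]; field_simp
    have hwpos : 0 < w := by positivity
    have hew : w + 1 ≤ Real.exp w := Real.add_one_le_exp w
    have hkey : B ≤ σ * Real.exp w := by
      have h1 : σ * Real.exp w ≥ σ * (w + 1) := mul_le_mul_of_nonneg_left hew hσ.le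
      have h2 : σ * (w + 1) * σ^2 = σ*(b*B) + σ*σ^2 := by
        rw [mul_add, add_mul, mul_assoc, hw1]; ring
      -- σ*(w+1) ≥ B  ⟺  σ*(w+1)*σ² ≥ B*σ²; σ*b*B ≥ σ*(B/8)*B ≥ (B/8)*(100σ)*σ·? 
      have h3 : B * σ^2 ≤ σ * (w + 1) * σ^2 := by
        rw [h2]
        nlinarith [mul_le_mul_of_nonneg_left hblow (mul_pos hσ hB0).le,
          mul_le_mul_of_nonneg_left hBσ (mul_pos hσ hσ).le, mul_pos hσ (mul_pos hσ hσ)]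
      have h4 : B ≤ σ * (w + 1) :=
        le_of_mul_le_mul_right (by linarith [h3]) (by positivity : (0:ℝ) < σ^2)
      linarith
    rw [Real.exp_neg]
    rw [mul_comm (B/2), inv_mul_le_iff₀ (Real.exp_pos w)] -- (exp w)⁻¹ * (B/2)? careful
    nlinarith [Real.exp_pos w]
  have hsig : 2*σ^2/B ≤ σ/2 := by
    rw [div_le_div_iff₀ hB0 (by norm_num : (0:ℝ) < 2)]
    nlinarith
  have hfinal := hstep1
  rw [hval] at hfinal
  have hEtot : ∫ x : ℝ, densLS g C σ B x * (|x| * Real.exp (-(c * |x|))) ≤ σ := by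
    linarith
  linarith

end Stmt18Aux4

namespace Stmt18Aux5
open Stmt18Aux Stmt18Aux2 Stmt18Aux3 Stmt18Aux4 Filter MeasureTheory

lemma core (g : ℝ → ℝ) {C σ B : ℝ} (hσ : 0 < σ) (hF : InClassF g C) (hBσ : 100*σ ≤ B)
    {β0 : ℝ} (hβ0 : 0 < β0) (seq : ℕ → ℝ) (h0 : seq 0 = β0)
    (hrec : ∀ t, seq (t+1) = ∫ x : ℝ, densLS g C σ B x * (x * Real.tanh (seq t * x / σ^2))) :
    ∃ βbar : ℝ, Tendsto seq atTop (nhds βbar) ∧ 0 < βbar ∧ |βbar - B| ≤ 10*σ := by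
  have hB0 : 0 < B := lt_of_lt_of_le (by positivity) hBσ
  have hσB : σ ≤ B := by linarith
  set H : ℝ → ℝ := fun b => ∫ x : ℝ, densLS g C σ B x * (x * Real.tanh (b * x / σ^2)) with hH
  have hrec' : ∀ t, seq (t+1) = H (seq t) := hrec
  have hpos : ∀ t, 0 < seq t := by
    intro t
    induction t with
    | zero => rw [h0]; exact hβ0
    | succ n ih => rw [hrec' n]; exact h_pos hF hσ ih
  have hub : ∀ t, seq (t+1) ≤ B + σ := fun t => by
    rw [hrec' t]; exact h_le hF hσ hB0 hσB _
  have key : ∀ b : ℝ, 0 < b → b ≤ B - 10*σ → b < H b := by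
    intro b hb hb2
    rcases le_or_gt b (B/8) with h8 | h8
    · exact keyA hF hσ hBσ hb h8
    · exact keyB hF hσ hBσ h8.le hb2
  have hcont : Continuous H := h_cont hF hσ
  have hfix_bound : ∀ βbar : ℝ, H βbar = βbar → 0 < βbar → |βbar - B| ≤ 10*σ := by
    intro βbar hfix hbpos
    have hup : βbar ≤ B + σ := by rw [← hfix]; exact h_le hF hσ hB0 hσB _
    have hlow : B - 10*σ < βbar := by
      by_contra hle
      push_neg at hle
      have := key βbar hbpos hle
      rw [hfix] at this
      exact lt_irrefl _ this
    rw [abs_le]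
    constructor <;> linarith
  have hfixpt : ∀ βbar : ℝ, Tendsto seq atTop (nhds βbar) → H βbar = βbar := by
    intro βbar hlim
    have h1 : Tendsto (fun t => seq (t+1)) atTop (nhds βbar) :=
      hlim.comp (tendsto_add_atTop_nat 1)
    have h2 : Tendsto (fun t => H (seq t)) atTop (nhds (H βbar)) :=
      (hcont.tendsto βbar).comp hlim
    have h3 : (fun t => seq (t+1)) = fun t => H (seq t) := funext fun t => hrec' t
    rw [h3] at h1
    exact tendsto_nhds_unique h2 h1
  rcases le_total (seq 0) (seq 1) with hcase | hcase
  · -- increasing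
    have hmonoseq : Monotone seq := by
      refine monotone_nat_of_le_succ ?_
      intro n
      induction n with
      | zero => exact hcase
      | succ m ih =>
        rw [hrec' m, hrec' (m+1)]
        exact h_mono hF hσ ih
    have hbdd : BddAbove (Set.range seq) := by
      refine ⟨max (B + σ) (seq 0), ?_⟩
      rintro _ ⟨t, rfl⟩
      cases t with
      | zero => exact le_max_right _ _
      | succ n => exact (hub n).trans (le_max_left _ _)
    have hlim := tendsto_atTop_ciSup hmonoseq hbdd
    set βbar := ⨆ t, seq t with hbar
    have hfix := hfixpt βbar hlim
    have hbpos : 0 < βbar := by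
      have := hmonoseq.ge_of_tendsto hlim 0
      rw [h0] at this
      linarith
    exact ⟨βbar, hlim, hbpos, hfix_bound βbar hfix hbpos⟩
  · -- decreasing
    have hanti : Antitone seq := by
      refine antitone_nat_of_succ_le ?_
      intro n
      induction n with
      | zero => exact hcase
      | succ m ih =>
        rw [hrec' m, hrec' (m+1)]
        exact h_mono hF hσ ih
    have hbdd : BddBelow (Set.range seq) := by
      refine ⟨0, ?_⟩
      rintro _ ⟨t, rfl⟩
      exact (hpos t).le
    have hlim := tendsto_atTop_ciInf hanti hbdd
    set βbar := ⨅ t, seq t with hbar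
    have hfix := hfixpt βbar hlim
    have hlow : ∀ t, B - 10*σ < seq t := by
      intro t
      by_contra hle
      push_neg at hle
      have h1 := key (seq t) (hpos t) hle
      rw [← hrec' t] at h1
      have h2 : seq (t+1) ≤ seq t := hanti (Nat.le_succ t)
      linarith
    have hbar_lb : B - 10*σ ≤ βbar :=
      ge_of_tendsto' hlim fun t => (hlow t).le
    have hbpos : 0 < βbar := by linarith
    exact ⟨βbar, hlim, hbpos, hfix_bound βbar hfix hbpos⟩

lemma flip {g : ℝ → ℝ} {C σ : ℝ} (hσ : 0 < σ) (c βs : ℝ) :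
    ∫ x : ℝ, densLS g C σ βs x * (x * Real.tanh (c * x / σ^2))
      = ∫ x : ℝ, densLS g C σ |βs| x * (x * Real.tanh (c * x / σ^2)) := by
  rcases le_or_gt 0 βs with h | h
  · rw [abs_of_nonneg h]
  · rw [abs_of_neg h]
    have h1 := integral_neg_eq_self
      (fun x => densLS g C σ βs x * (x * Real.tanh (c * x / σ^2))) volume
    have h2 : (fun x : ℝ => (fun y => densLS g C σ βs y * (y * Real.tanh (c * y / σ^2))) (-x))
        = fun x : ℝ => densLS g C σ (-βs) x * (x * Real.tanh (c * x / σ^2)) := by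
      funext x
      simp only
      rw [densLS_neg_param, show c * -x / σ^2 = -(c * x / σ^2) by ring, Real.tanh_neg]
      ring
    rw [h2] at h1
    exact h1.symm

end Stmt18Aux5


/-- Fit with 2GMM: there is an absolute constant `C₀ > 0` such that for
any `f ∈ F`, `β* ≠ 0`, `σ > 0` with SNR `η = |β*|/σ ≥ C₀`, the mis-specified
(Gaussian-fit) LS-EM iteration `β^{t+1} = E_{X ~ f_{β*,σ}}[X tanh(β^t X/σ²)]` converges
from any nonzero `β⁰` to a limit `β̄` with `sign(β̄) = sign(β⁰)` and
`|β̄ - sign(β⁰β*)β*| ≤ 10σ`. -/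
theorem stmt18 :
    ∃ C₀ : ℝ, 0 < C₀ ∧
      ∀ (g : ℝ → ℝ) (C σ βs : ℝ), 0 < σ → InClassF g C → βs ≠ 0 →
        C₀ ≤ |βs| / σ →
        ∀ (β0 : ℝ), β0 ≠ 0 →
        ∀ (seq : ℕ → ℝ), seq 0 = β0 →
          (∀ t : ℕ, seq (t + 1) =
            ∫ x : ℝ, densLS g C σ βs x * (x * Real.tanh (seq t * x / σ ^ 2))) →
          ∃ βbar : ℝ, Tendsto seq atTop (nhds βbar) ∧
            Real.sign βbar = Real.sign β0 ∧
            |βbar - Real.sign (β0 * βs) * βs| ≤ 10 * σ := by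
  refine ⟨100, by norm_num, ?_⟩
  intro g C σ βs hσ hF hβs hη β0 hβ0 seq h0 hrec
  have hBσ : 100 * σ ≤ |βs| := by
    rw [← le_div_iff₀ hσ]
    exact hη
  have hrecB : ∀ t, seq (t+1)
      = ∫ x : ℝ, densLS g C σ |βs| x * (x * Real.tanh (seq t * x / σ^2)) := by
    intro t
    rw [hrec t]
    exact Stmt18Aux5.flip hσ (seq t) βs
  rcases hβ0.lt_or_gt with hneg | hpos
  · -- β0 < 0 : use the negated sequence
    set seq' : ℕ → ℝ := fun t => -seq t with hseq'
    have h0' : seq' 0 = -β0 := by rw [hseq']; simp [h0]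
    have hrec' : ∀ t, seq' (t+1)
        = ∫ x : ℝ, densLS g C σ |βs| x * (x * Real.tanh (seq' t * x / σ^2)) := by
      intro t
      have h1 : seq' (t+1) = -(∫ x : ℝ, densLS g C σ |βs| x
          * (x * Real.tanh (seq t * x / σ^2))) := by
        rw [hseq']
        simp only
        rw [hrecB t]
      rw [h1, ← integral_neg]
      congr 1
      funext x
      rw [hseq']
      simp only
      rw [show -seq t * x / σ^2 = -(seq t * x / σ^2) by ring, Real.tanh_neg]
      ring
    obtain ⟨βbar', hlim', hpos', hbound'⟩ :=
      Stmt18Aux5.core g hσ hF hBσ (by linarith : (0:ℝ) < -β0) seq' h0' hrec'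
    refine ⟨-βbar', ?_, ?_, ?_⟩
    · have h2 : seq = fun t => -seq' t := by funext t; rw [hseq']; simp
      rw [h2]
      exact hlim'.neg
    · rw [Real.sign_of_neg (by linarith : -βbar' < 0), Real.sign_of_neg hneg]
    · have hsign : Real.sign (β0 * βs) * βs = -|βs| := by
        rcases hβs.lt_or_gt with hβsneg | hβspos
        · rw [Real.sign_of_pos (mul_pos_of_neg_of_neg hneg hβsneg), abs_of_neg hβsneg]
          ring
        · rw [Real.sign_of_neg (mul_neg_of_neg_of_pos hneg hβspos), abs_of_pos hβspos]
          ring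
      rw [hsign, show -βbar' - -|βs| = -(βbar' - |βs|) by ring, abs_neg]
      exact hbound'
  · -- β0 > 0
    obtain ⟨βbar, hlim, hbpos, hbound⟩ :=
      Stmt18Aux5.core g hσ hF hBσ hpos seq h0 hrecB
    refine ⟨βbar, hlim, ?_, ?_⟩
    · rw [Real.sign_of_pos hbpos, Real.sign_of_pos hpos]
    · have hsign : Real.sign (β0 * βs) * βs = |βs| := by
        rcases hβs.lt_or_gt with hβsneg | hβspos
        · rw [Real.sign_of_neg (mul_neg_of_pos_of_neg hpos hβsneg), abs_of_neg hβsneg]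
          ring
        · rw [Real.sign_of_pos (mul_pos hpos hβspos), abs_of_pos hβspos]
          ring
      rw [hsign]
      exact hbound
end
end
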